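/- arXiv:1905.11823 — 5 statements merged into one kernel-verified Lean document; each statement's English description precedes it below -/
import Mathlib

section
/- Let (X,d) be a metric space and I : X → ℝ a continuous function, regarded also as a proper lower semicontinuous functional with epigraph extension G_I on (epi(I), d_epi). Then for every x ∈ X: |dG_I|(x,I(x)) = |dI|(x)/√(1 + |dI|(x)²) if |dI|(x) < ∞, and |dG_I|(x,I(x)) = 1 if |dI|(x) = ∞; moreover |dG_I|(x,ξ) = 1 whenever ξ > I(x). -/
open Set Metric Filter
open scoped ENNReal Topology

/-- A point `x` is a `δ`-regular point of the (continuous) function `J`: there are a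
neighbourhood `U` of `x`, a constant `α > 0` and a continuous map `ψ : U × [0,α] → Y` with
`d(ψ(u,t),u) ≤ t` and `J(u) - J(ψ(u,t)) ≥ δ t`. -/
def IsDeltaRegular {Y : Type*} [MetricSpace Y] (J : Y → ℝ) (x : Y) (δ : ℝ) : Prop :=
  ∃ U ∈ 𝓝 x, ∃ α : ℝ, 0 < α ∧ ∃ ψ : Y → ℝ → Y,
    ContinuousOn (fun p : Y × ℝ => ψ p.1 p.2) (U ×ˢ Icc 0 α) ∧
    ∀ u ∈ U, ∀ t ∈ Icc (0:ℝ) α, dist (ψ u t) u ≤ t ∧ δ * t ≤ J u - J (ψ u t)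

/-- The weak metric slope `|dJ|(x)` of a (continuous) function `J` at `x`: the supremum of all
`δ > 0` such that `x` is a `δ`-regular point of `J` (equal to `0` if there is no such `δ`). -/
noncomputable def weakSlope {Y : Type*} [MetricSpace Y] (J : Y → ℝ) (x : Y) : ℝ≥0∞ :=
  ⨆ δ ∈ {δ : ℝ | 0 < δ ∧ IsDeltaRegular J x δ}, ENNReal.ofReal δ

/-- The weak metric Palais–Smale condition: every sequence along which `J` converges to a real
number and the weak metric slope tends to `0` has a convergent subsequence. -/
def WeakPalaisSmale {Y : Type*} [MetricSpace Y] (J : Y → ℝ) : Prop :=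
  ∀ (u : ℕ → Y) (c : ℝ),
    Tendsto (fun n => J (u n)) atTop (𝓝 c) →
    Tendsto (fun n => weakSlope J (u n)) atTop (𝓝 0) →
    ∃ (y : Y) (φ : ℕ → ℕ), StrictMono φ ∧ Tendsto (u ∘ φ) atTop (𝓝 y)

/-- The epigraph `epi(I) = {(u,ξ) : I(u) ≤ ξ}` of a functional `I : X → ℝ ∪ {+∞}`, equipped
(via `WithLp 2`) with the graph metric `d_epi((u,ξ),(v,ζ)) = √(d(u,v)² + |ξ-ζ|²)`. -/
abbrev Epi {X : Type*} [MetricSpace X] (I : X → EReal) : Type _ :=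
  {p : WithLp 2 (X × ℝ) //
    I ((WithLp.equiv 2 (X × ℝ)) p).1 ≤ ((((WithLp.equiv 2 (X × ℝ)) p).2 : ℝ) : EReal)}

/-- The point of an epigraph element `(u, ξ)` of the epigraph of `I`. -/
noncomputable def Epi.pt {X : Type*} [MetricSpace X] {I : X → EReal} (p : Epi I) : X :=
  ((WithLp.equiv 2 (X × ℝ)) p.1).1

/-- Build an element of the epigraph of `I` from `x : X` and `ξ : ℝ` with `I x ≤ ξ`. -/
noncomputable def Epi.mk' {X : Type*} [MetricSpace X] (I : X → EReal) (x : X) (ξ : ℝ)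
    (h : I x ≤ (ξ : EReal)) : Epi I :=
  ⟨(WithLp.equiv 2 (X × ℝ)).symm (x, ξ), by simpa using h⟩

/-- The epigraph extension `G_I : epi(I) → ℝ`, `G_I(u,ξ) = ξ`. -/
noncomputable def epiExt {X : Type*} [MetricSpace X] (I : X → EReal) (p : Epi I) : ℝ :=
  ((WithLp.equiv 2 (X × ℝ)) p.1).2

/-- The weak metric slope `|dI|(x)` of a proper lower semicontinuous functional
`I : X → ℝ ∪ {+∞}` at a point `x ∈ D(I)`, defined through the weak metric slope of the
epigraph extension `G_I` at `(x, I(x))`. -/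
noncomputable def lscWeakSlope {X : Type*} [MetricSpace X] (I : X → EReal) (x : X) : ℝ≥0∞ :=
  if hx : I x ≤ (((I x).toReal : ℝ) : EReal) then
    let s := weakSlope (epiExt I) (Epi.mk' I x (I x).toReal hx)
    if s < 1 then ENNReal.ofReal (s.toReal / Real.sqrt (1 - s.toReal ^ 2)) else ⊤
  else ⊤

/-- The weak metric Palais–Smale condition for a proper l.s.c. functional `I : X → ℝ ∪ {+∞}`. -/
def WeakPalaisSmaleLSC {X : Type*} [MetricSpace X] (I : X → EReal) : Prop :=
  ∀ (u : ℕ → X) (c : ℝ),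
    Tendsto (fun n => I (u n)) atTop (𝓝 ((c : EReal))) →
    Tendsto (fun n => lscWeakSlope I (u n)) atTop (𝓝 0) →
    ∃ (y : X) (φ : ℕ → ℕ), StrictMono φ ∧ Tendsto (u ∘ φ) atTop (𝓝 y)

/-- The (strong) metric slope `|∂J|(x) = limsup_{y → x} (J(x) - J(y))₊ / d(x,y)` of a
real-valued function. -/
noncomputable def metricSlopeReal {Y : Type*} [MetricSpace Y] (J : Y → ℝ) (x : Y) : ℝ≥0∞ :=
  limsup (fun y => ENNReal.ofReal (max (J x - J y) 0 / dist x y)) (𝓝[≠] x)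

/-- The (strong) metric slope of a functional `I : X → ℝ ∪ {+∞}`, equal to `+∞` outside of the
domain of `I`. -/
noncomputable def metricSlope {X : Type*} [MetricSpace X] (I : X → EReal) (x : X) : ℝ≥0∞ :=
  if I x = ⊤ then ⊤
  else limsup (fun y => ENNReal.ofReal ((max (I x - I y) 0).toReal / dist x y)) (𝓝[≠] x)

/-- `γ : [0,1] → Y` is a unit speed minimising geodesic from `x₀` to `x₁`. -/
def IsUnitSpeedGeodesic {Y : Type*} [MetricSpace Y] (γ : ℝ → Y) (x₀ x₁ : Y) : Prop :=
  ContinuousOn γ (Icc 0 1) ∧ γ 0 = x₀ ∧ γ 1 = x₁ ∧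
    ∀ s ∈ Icc (0:ℝ) 1, ∀ t ∈ Icc (0:ℝ) 1, dist (γ s) (γ t) = |s - t| * dist x₀ x₁

/-- A geodesic metric space: any two points are joined by a unit speed minimising geodesic. -/
def IsGeodesicSpace (Y : Type*) [MetricSpace Y] : Prop :=
  ∀ x₀ x₁ : Y, ∃ γ : ℝ → Y, IsUnitSpeedGeodesic γ x₀ x₁

/-- `I` is `λ`-geodesically convex. -/
def GeodesicallyConvex {X : Type*} [MetricSpace X] (I : X → EReal) (lam : ℝ) : Prop :=
  ∀ x₀ x₁ : X, I x₀ ≠ ⊤ → I x₁ ≠ ⊤ →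
    ∀ γ : ℝ → X, IsUnitSpeedGeodesic γ x₀ x₁ → ∀ t ∈ Icc (0:ℝ) 1,
      I (γ t) ≤ ((1 - t : ℝ) : EReal) * I x₀ + ((t : ℝ) : EReal) * I x₁
        - (((lam / 2) * t * (1 - t) * dist x₀ x₁ ^ 2 : ℝ) : EReal)
namespace DMaux

theorem sqrt1p_pos (δ : ℝ) : 0 < Real.sqrt (1 + δ ^ 2) := Real.sqrt_pos.2 (by positivity)

theorem sq_sqrt1p (δ : ℝ) : Real.sqrt (1 + δ ^ 2) ^ 2 = 1 + δ ^ 2 :=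
  Real.sq_sqrt (by positivity)

theorem f_nonneg {δ : ℝ} (h : 0 ≤ δ) : 0 ≤ δ / Real.sqrt (1 + δ ^ 2) :=
  div_nonneg h (sqrt1p_pos δ).le

theorem f_pos {δ : ℝ} (h : 0 < δ) : 0 < δ / Real.sqrt (1 + δ ^ 2) :=
  div_pos h (sqrt1p_pos δ)

theorem f_lt_one {δ : ℝ} (h : 0 ≤ δ) : δ / Real.sqrt (1 + δ ^ 2) < 1 := by
  rw [div_lt_one (sqrt1p_pos δ)]
  rw [show δ = Real.sqrt (δ ^ 2) by rw [Real.sqrt_sq h]]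
  exact Real.sqrt_lt_sqrt (by positivity) (by nlinarith [Real.sq_sqrt (sq_nonneg δ)])

theorem f_mono {a b : ℝ} (ha : 0 ≤ a) (hab : a ≤ b) :
    a / Real.sqrt (1 + a ^ 2) ≤ b / Real.sqrt (1 + b ^ 2) := by
  have h1 := sqrt1p_pos a
  have h2 := sqrt1p_pos b
  rw [div_le_div_iff₀ h1 h2]
  nlinarith [sq_sqrt1p a, sq_sqrt1p b, mul_pos h1 h2, sq_nonneg (a * Real.sqrt (1 + b ^ 2) - b * Real.sqrt (1 + a ^ 2)), mul_nonneg ha h2.le, mul_nonneg (ha.trans hab) h1.le]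

theorem sqrt1m_pos {y : ℝ} (h0 : 0 ≤ y) (h1 : y < 1) : 0 < Real.sqrt (1 - y ^ 2) :=
  Real.sqrt_pos.2 (by nlinarith)

theorem g_pos {y : ℝ} (h0 : 0 < y) (h1 : y < 1) : 0 < y / Real.sqrt (1 - y ^ 2) :=
  div_pos h0 (sqrt1m_pos h0.le h1)

/-- `g (f δ) = δ`. -/
theorem g_f {δ : ℝ} (hδ : 0 ≤ δ) :
    (δ / Real.sqrt (1 + δ ^ 2)) / Real.sqrt (1 - (δ / Real.sqrt (1 + δ ^ 2)) ^ 2) = δ := by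
  set s := Real.sqrt (1 + δ ^ 2) with hs
  have hs2 : s ^ 2 = 1 + δ ^ 2 := sq_sqrt1p δ
  have hs0 : 0 < s := sqrt1p_pos δ
  have h1 : 1 - (δ / s) ^ 2 = (1 / s) ^ 2 := by
    field_simp
    linarith
  rw [h1, Real.sqrt_sq (by positivity)]
  field_simp

/-- `f (g y) = y`. -/
theorem f_g {y : ℝ} (h0 : 0 ≤ y) (h1 : y < 1) :
    (y / Real.sqrt (1 - y ^ 2)) / Real.sqrt (1 + (y / Real.sqrt (1 - y ^ 2)) ^ 2) = y := by
  set s := Real.sqrt (1 - y ^ 2) with hs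
  have hs0 : 0 < s := sqrt1m_pos h0 h1
  have hs2 : s ^ 2 = 1 - y ^ 2 := Real.sq_sqrt (by nlinarith)
  have h2 : 1 + (y / s) ^ 2 = (1 / s) ^ 2 := by
    field_simp
    linarith
  rw [h2, Real.sqrt_sq (by positivity)]
  field_simp

variable {X : Type*} [MetricSpace X] {I : X → ℝ}

theorem epi_dist_eq (p q : Epi (fun y => ((I y : ℝ) : EReal))) :
    dist p q = Real.sqrt (dist p.pt q.pt ^ 2 + (epiExt _ p - epiExt _ q) ^ 2) := by
  rw [Subtype.dist_eq, WithLp.prod_dist_eq_add (p := 2) (by norm_num) p.1 q.1]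
  rw [Real.sqrt_eq_rpow]
  norm_num
  rw [Real.dist_eq, sq_abs]
  rfl

theorem pt_continuous : Continuous (fun p : Epi (fun y => ((I y : ℝ) : EReal)) => p.pt) :=
  continuous_fst.comp ((WithLp.prod_continuous_ofLp 2 X ℝ).comp continuous_subtype_val)

theorem ext_continuous : Continuous (epiExt (fun y => ((I y : ℝ) : EReal))) :=
  continuous_snd.comp ((WithLp.prod_continuous_ofLp 2 X ℝ).comp continuous_subtype_val)

theorem mem_le (p : Epi (fun y => ((I y : ℝ) : EReal))) : I p.pt ≤ epiExt _ p :=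
  EReal.coe_le_coe_iff.mp p.2

theorem reg_mono {Y : Type*} [MetricSpace Y] {J : Y → ℝ} {x : Y} {δ δ' : ℝ}
    (h : IsDeltaRegular J x δ) (hle : δ' ≤ δ) : IsDeltaRegular J x δ' := by
  obtain ⟨U, hU, α, hα, ψ, hc, hψ⟩ := h
  exact ⟨U, hU, α, hα, ψ, hc, fun u hu t ht => ⟨(hψ u hu t ht).1,
    le_trans (mul_le_mul_of_nonneg_right hle ht.1) (hψ u hu t ht).2⟩⟩

theorem reg_le_one {p₀ : Epi (fun y => ((I y : ℝ) : EReal))} {ε : ℝ} (hε : 0 < ε)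
    (h : IsDeltaRegular (epiExt _) p₀ ε) : ε ≤ 1 := by
  obtain ⟨U, hU, α, hα, ψ, hc, hψ⟩ := h
  obtain ⟨hd, hG⟩ := hψ p₀ (mem_of_mem_nhds hU) α ⟨hα.le, le_rfl⟩
  have h1 : epiExt _ p₀ - epiExt _ (ψ p₀ α) ≤ dist (ψ p₀ α) p₀ := by
    rw [epi_dist_eq]
    calc epiExt _ p₀ - epiExt _ (ψ p₀ α)
        ≤ |epiExt _ (ψ p₀ α) - epiExt _ p₀| := by rw [abs_sub_comm]; exact le_abs_self _
      _ = Real.sqrt ((epiExt _ (ψ p₀ α) - epiExt _ p₀) ^ 2) := (Real.sqrt_sq_eq_abs _).symm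
      _ ≤ _ := Real.sqrt_le_sqrt (le_add_of_nonneg_left (sq_nonneg _))
  have : ε * α ≤ 1 * α := by nlinarith
  exact le_of_mul_le_mul_right this hα

theorem le_weakSlope {Y : Type*} [MetricSpace Y] {J : Y → ℝ} {x : Y} {δ : ℝ} (h0 : 0 < δ)
    (h : IsDeltaRegular J x δ) : ENNReal.ofReal δ ≤ weakSlope J x :=
  le_biSup _ (show δ ∈ {δ : ℝ | 0 < δ ∧ IsDeltaRegular J x δ} from ⟨h0, h⟩)

theorem weakSlope_le {Y : Type*} [MetricSpace Y] {J : Y → ℝ} {x : Y} {b : ℝ≥0∞}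
    (h : ∀ δ : ℝ, 0 < δ → IsDeltaRegular J x δ → ENNReal.ofReal δ ≤ b) : weakSlope J x ≤ b :=
  iSup₂_le fun δ hδ => h δ hδ.1 hδ.2

theorem reg_of_lt_slope {Y : Type*} [MetricSpace Y] {J : Y → ℝ} {x : Y} {δ : ℝ}
    (h : ENNReal.ofReal δ < weakSlope J x) : IsDeltaRegular J x δ := by
  by_contra hcon
  refine absurd h (not_lt.2 (weakSlope_le fun δ' h0' hr => ?_))
  rcases le_or_gt δ' δ with hle | hlt
  · exact ENNReal.ofReal_le_ofReal hle
  · exact absurd (reg_mono hr hlt.le) hcon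

theorem reg_epi_of_reg (hI : Continuous I) {x : X} {δ : ℝ} (hδ : 0 < δ)
    (h : IsDeltaRegular I x δ) :
    IsDeltaRegular (epiExt (fun y => ((I y : ℝ) : EReal)))
      (Epi.mk' (fun y => ((I y : ℝ) : EReal)) x (I x) le_rfl)
      (δ / Real.sqrt (1 + δ ^ 2)) := by
  obtain ⟨U, hU, α, hα, ψ, hc, hψ⟩ := h
  set c := Real.sqrt (1 + δ ^ 2) with hcdef
  have hc0 : 0 < c := sqrt1p_pos δ
  have hc2 : c ^ 2 = 1 + δ ^ 2 := sq_sqrt1p δ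
  refine ⟨Epi.pt ⁻¹' U, pt_continuous.continuousAt.preimage_mem_nhds hU, α * c,
    by positivity,
    fun p s => ⟨(WithLp.equiv 2 (X × ℝ)).symm
        (ψ p.pt (s / c), max (I (ψ p.pt (s / c))) (epiExt _ p - δ * (s / c))),
      by simp only [Equiv.apply_symm_apply]; exact_mod_cast le_max_left _ _⟩, ?_, ?_⟩
  · -- continuity
    have hmap : MapsTo (fun pr : Epi (fun y => ((I y : ℝ) : EReal)) × ℝ => (pr.1.pt, pr.2 / c))
        ((Epi.pt ⁻¹' U) ×ˢ Icc 0 (α * c)) (U ×ˢ Icc 0 α) := by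
      rintro ⟨p, s⟩ ⟨hp, hs0, hs1⟩
      exact ⟨hp, div_nonneg hs0 hc0.le, (div_le_iff₀ hc0).2 hs1⟩
    have hcont0 : Continuous (fun pr : Epi (fun y => ((I y : ℝ) : EReal)) × ℝ =>
        (pr.1.pt, pr.2 / c)) :=
      (pt_continuous.comp continuous_fst).prodMk (continuous_snd.div_const c)
    have hcont1 : ContinuousOn (fun pr : Epi (fun y => ((I y : ℝ) : EReal)) × ℝ =>
        ψ pr.1.pt (pr.2 / c)) ((Epi.pt ⁻¹' U) ×ˢ Icc 0 (α * c)) :=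
      hc.comp hcont0.continuousOn hmap
    have hcont2 : ContinuousOn (fun pr : Epi (fun y => ((I y : ℝ) : EReal)) × ℝ =>
        max (I (ψ pr.1.pt (pr.2 / c))) (epiExt _ pr.1 - δ * (pr.2 / c)))
        ((Epi.pt ⁻¹' U) ×ˢ Icc 0 (α * c)) :=
      (hI.comp_continuousOn hcont1).sup
        (((ext_continuous.comp continuous_fst).sub
          (continuous_const.mul (continuous_snd.div_const c))).continuousOn)
    rw [Topology.IsInducing.continuousOn_iff (g := (Subtype.val : Epi (fun y => ((I y : ℝ) : EReal)) → WithLp 2 (X × ℝ))) ⟨rfl⟩]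
    exact ((WithLp.prod_continuous_toLp 2 X ℝ).comp_continuousOn
      (hcont1.prodMk hcont2))
  · -- estimates
    rintro p hp s ⟨hs0, hs1⟩
    set t := s / c with htdef
    have ht : t ∈ Icc (0:ℝ) α := ⟨div_nonneg hs0 hc0.le, (div_le_iff₀ hc0).2 hs1⟩
    obtain ⟨hd, hJ⟩ := hψ p.pt hp t ht
    have hIζ : I p.pt ≤ epiExt _ p := mem_le p
    have hmax : max (I (ψ p.pt t)) (epiExt _ p - δ * t) = epiExt _ p - δ * t :=
      max_eq_right (by nlinarith)
    constructor
    · rw [epi_dist_eq]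
      have hst : s = t * c := by rw [htdef, div_mul_cancel₀ _ hc0.ne']
      have hsq : dist (ψ p.pt t) p.pt ^ 2 +
          (max (I (ψ p.pt t)) (epiExt _ p - δ * t) - epiExt _ p) ^ 2 ≤ s ^ 2 := by
        rw [hmax, hst]
        have hdn : (0:ℝ) ≤ dist (ψ p.pt t) p.pt := dist_nonneg
        have hd2 : dist (ψ p.pt t) p.pt ^ 2 ≤ t ^ 2 := pow_le_pow_left₀ hdn hd 2
        have hce : (t * c) ^ 2 = t ^ 2 + (δ * t) ^ 2 := by rw [mul_pow, hc2]; ring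
        nlinarith [hd2, hce]
      calc Real.sqrt _ ≤ Real.sqrt (s ^ 2) := Real.sqrt_le_sqrt hsq
        _ = s := Real.sqrt_sq hs0
    · show _ ≤ epiExt _ p - max (I (ψ p.pt t)) (epiExt _ p - δ * t)
      rw [hmax]
      have heq : δ / c * s = δ * t := by rw [htdef]; field_simp
      linarith [heq.le, heq.ge]

theorem reg_of_reg_epi (hI : Continuous I) {x : X} {ε : ℝ} (hε0 : 0 < ε) (hε1 : ε < 1)
    (h : IsDeltaRegular (epiExt (fun y => ((I y : ℝ) : EReal)))
      (Epi.mk' (fun y => ((I y : ℝ) : EReal)) x (I x) le_rfl) ε) :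
    IsDeltaRegular I x (ε / Real.sqrt (1 - ε ^ 2)) := by
  obtain ⟨U', hU', α', hα', Ψ, hΨc, hΨ⟩ := h
  set c := Real.sqrt (1 - ε ^ 2) with hcdef
  have hc0 : 0 < c := sqrt1m_pos hε0.le hε1
  have hc2 : c ^ 2 = 1 - ε ^ 2 := Real.sq_sqrt (by nlinarith)
  set emb : X → Epi (fun y => ((I y : ℝ) : EReal)) :=
    fun u => Epi.mk' (fun y => ((I y : ℝ) : EReal)) u (I u) le_rfl with hembdef
  have hembc : Continuous emb :=
    Continuous.subtype_mk
      ((WithLp.prod_continuous_toLp 2 X ℝ).comp (continuous_id.prodMk hI)) _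
  refine ⟨emb ⁻¹' U', hembc.continuousAt.preimage_mem_nhds hU', α' * c, by positivity,
    fun u t => (Ψ (emb u) (t / c)).pt, ?_, ?_⟩
  · have hmap : MapsTo (fun pr : X × ℝ => (emb pr.1, pr.2 / c))
        ((emb ⁻¹' U') ×ˢ Icc 0 (α' * c)) (U' ×ˢ Icc 0 α') := by
      rintro ⟨u, t⟩ ⟨hu, ht0, ht1⟩
      exact ⟨hu, div_nonneg ht0 hc0.le, (div_le_iff₀ hc0).2 ht1⟩
    exact pt_continuous.comp_continuousOn
      (hΨc.comp ((hembc.comp continuous_fst).prodMk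
        (continuous_snd.div_const c)).continuousOn hmap)
  · rintro u hu t ⟨ht0, ht1⟩
    set s := t / c with hsdef
    have hs : s ∈ Icc (0:ℝ) α' := ⟨div_nonneg ht0 hc0.le, (div_le_iff₀ hc0).2 ht1⟩
    obtain ⟨hd, hG⟩ := hΨ (emb u) hu s hs
    set q := Ψ (emb u) s with hq
    have hvζ : I q.pt ≤ epiExt _ q := mem_le q
    have hext : epiExt (fun y => ((I y : ℝ) : EReal)) (emb u) = I u := rfl
    have hpt : (emb u).pt = u := rfl
    rw [hext] at hG
    have hA : dist q.pt u ^ 2 + (epiExt _ q - I u) ^ 2 ≤ s ^ 2 := by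
      have h1 : Real.sqrt (dist q.pt u ^ 2 + (epiExt _ q - I u) ^ 2) ≤ s := by
        rw [epi_dist_eq] at hd
        exact hd
      have h2 : (0:ℝ) ≤ dist q.pt u ^ 2 + (epiExt _ q - I u) ^ 2 := by positivity
      calc dist q.pt u ^ 2 + (epiExt _ q - I u) ^ 2
          = Real.sqrt (dist q.pt u ^ 2 + (epiExt _ q - I u) ^ 2) ^ 2 := (Real.sq_sqrt h2).symm
        _ ≤ s ^ 2 := pow_le_pow_left₀ (Real.sqrt_nonneg _) h1 2
    have hts : t = s * c := by rw [hsdef]; field_simp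
    have hεs : ε * s ≥ 0 := mul_nonneg hε0.le hs.1
    constructor
    · -- dist (q.pt) u ≤ t
      have hdn : (0:ℝ) ≤ dist q.pt u := dist_nonneg
      nlinarith [hG, hA, hs.1]
    · -- δ t ≤ I u - I q.pt
      have : ε / c * t = ε * s := by rw [hts]; field_simp
      linarith [hG, hvζ, this.le, this.ge]

theorem reg_epi_one (hI : Continuous I) {x : X} {ξ : ℝ} (hξ : I x < ξ)
    (hm : (fun y => ((I y : ℝ) : EReal)) x ≤ ((ξ : ℝ) : EReal)) :
    IsDeltaRegular (epiExt (fun y => ((I y : ℝ) : EReal)))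
      (Epi.mk' (fun y => ((I y : ℝ) : EReal)) x ξ hm) 1 := by
  set ε := (ξ - I x) / 3 with hεdef
  have hε : 0 < ε := by rw [hεdef]; linarith
  refine ⟨(Epi.pt ⁻¹' (I ⁻¹' Iio (I x + ε))) ∩ (epiExt _ ⁻¹' Ioi (ξ - ε)), ?_, ε, hε,
    fun p s => ⟨(WithLp.equiv 2 (X × ℝ)).symm (p.pt, max (I p.pt) (epiExt _ p - s)),
      by simp only [Equiv.apply_symm_apply]; exact_mod_cast le_max_left _ _⟩, ?_, ?_⟩
  · refine inter_mem ?_ ?_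
    · exact (hI.comp pt_continuous).continuousAt.preimage_mem_nhds
        (Iio_mem_nhds (by show I x < I x + ε; linarith))
    · exact ext_continuous.continuousAt.preimage_mem_nhds
        (Ioi_mem_nhds (by show ξ - ε < ξ; linarith))
  · rw [Topology.IsInducing.continuousOn_iff (g := (Subtype.val : Epi (fun y => ((I y : ℝ) : EReal)) → WithLp 2 (X × ℝ))) ⟨rfl⟩]
    exact ((WithLp.prod_continuous_toLp 2 X ℝ).comp
      ((pt_continuous.comp continuous_fst).prodMk
        ((hI.comp (pt_continuous.comp continuous_fst)).max
          ((ext_continuous.comp continuous_fst).sub continuous_snd)))).continuousOn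
  · rintro p ⟨hp1, hp2⟩ s ⟨hs0, hs1⟩
    have hp1' : I p.pt < I x + ε := hp1
    have hp2' : ξ - ε < epiExt _ p := hp2
    have hmax : max (I p.pt) (epiExt _ p - s) = epiExt _ p - s := by
      apply max_eq_right
      rw [hεdef] at hp1' hp2' hs1
      linarith
    constructor
    · rw [epi_dist_eq]
      show Real.sqrt (dist p.pt p.pt ^ 2 + (max (I p.pt) (epiExt _ p - s) - epiExt _ p) ^ 2) ≤ s
      rw [hmax, dist_self]
      have : (0:ℝ) ^ 2 + (epiExt _ p - s - epiExt _ p) ^ 2 = s ^ 2 := by ring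
      rw [this, Real.sqrt_sq hs0]
    · show 1 * s ≤ epiExt _ p - max (I p.pt) (epiExt _ p - s)
      rw [hmax]
      linarith

end DMaux

/-- Relation between the weak metric slope of a continuous function `I : X → ℝ` and the weak
metric slope of its epigraph extension `G_I` (Proposition 2.3 of Degiovanni–Marzocchi):
`|dG_I|(x, I x) = |dI|(x)/√(1+|dI|(x)²)` when `|dI|(x) < ∞`, `|dG_I|(x, I x) = 1` when
`|dI|(x) = ∞` and `|dG_I|(x, ξ) = 1` whenever `ξ > I x`. -/


theorem weakSlope_epiExt_of_continuous {X : Type*} [MetricSpace X]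
    (I : X → ℝ) (hI : Continuous I) (x : X) :
    (weakSlope I x ≠ ⊤ →
      weakSlope (epiExt (fun y => ((I y : ℝ) : EReal)))
          (Epi.mk' (fun y => ((I y : ℝ) : EReal)) x (I x) le_rfl)
        = ENNReal.ofReal
            ((weakSlope I x).toReal / Real.sqrt (1 + (weakSlope I x).toReal ^ 2))) ∧
    (weakSlope I x = ⊤ →
      weakSlope (epiExt (fun y => ((I y : ℝ) : EReal)))
          (Epi.mk' (fun y => ((I y : ℝ) : EReal)) x (I x) le_rfl) = 1) ∧
    (∀ ξ : ℝ, ∀ hξ : I x < ξ,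
      weakSlope (epiExt (fun y => ((I y : ℝ) : EReal)))
          (Epi.mk' (fun y => ((I y : ℝ) : EReal)) x ξ (by show ((I x : ℝ) : EReal) ≤ ((ξ : ℝ) : EReal); exact_mod_cast hξ.le)) = 1) := by
  open DMaux in
  refine ⟨?_, ?_, ?_⟩
  · -- finite case
    intro hfin
    set σ := (weakSlope I x).toReal with hσdef
    have hσ0 : 0 ≤ σ := ENNReal.toReal_nonneg
    apply le_antisymm
    · -- upper bound
      apply weakSlope_le
      intro ε hε0 hεr
      have hε1 : ε ≤ 1 := reg_le_one hε0 hεr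
      rcases lt_or_eq_of_le hε1 with hlt | heq
      · -- ε < 1
        have hreg : IsDeltaRegular I x (ε / Real.sqrt (1 - ε ^ 2)) :=
          reg_of_reg_epi hI hε0 hlt hεr
        have hle : ENNReal.ofReal (ε / Real.sqrt (1 - ε ^ 2)) ≤ weakSlope I x :=
          le_weakSlope (g_pos hε0 hlt) hreg
        rw [← ENNReal.ofReal_toReal hfin, ← hσdef] at hle
        have hgle : ε / Real.sqrt (1 - ε ^ 2) ≤ σ :=
          (ENNReal.ofReal_le_ofReal_iff hσ0).1 hle
        have : ε ≤ σ / Real.sqrt (1 + σ ^ 2) := by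
          calc ε = (ε / Real.sqrt (1 - ε ^ 2)) /
              Real.sqrt (1 + (ε / Real.sqrt (1 - ε ^ 2)) ^ 2) := (f_g hε0.le hlt).symm
            _ ≤ _ := f_mono (div_nonneg hε0.le (Real.sqrt_nonneg _)) hgle
        exact ENNReal.ofReal_le_ofReal this
      · -- ε = 1: impossible since slope of I is finite
        exfalso
        subst heq
        set M := σ + 1 with hMdef
        have hM : 0 < M := by rw [hMdef]; linarith
        have hfM1 : M / Real.sqrt (1 + M ^ 2) < 1 := f_lt_one hM.le
        have hregG : IsDeltaRegular (epiExt (fun y => ((I y : ℝ) : EReal)))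
            (Epi.mk' (fun y => ((I y : ℝ) : EReal)) x (I x) le_rfl)
            (M / Real.sqrt (1 + M ^ 2)) := reg_mono hεr hfM1.le
        have hreg := reg_of_reg_epi hI (f_pos hM) hfM1 hregG
        rw [g_f hM.le] at hreg
        have hle := le_weakSlope hM hreg
        rw [← ENNReal.ofReal_toReal hfin, ← hσdef] at hle
        have h2 : M ≤ σ := (ENNReal.ofReal_le_ofReal_iff hσ0).1 hle
        rw [hMdef] at h2
        linarith
    · -- lower bound
      refine le_of_forall_lt fun c hc => ?_
      have hct : c ≠ ⊤ := (hc.trans_le le_top).ne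
      have hcr : c.toReal < σ / Real.sqrt (1 + σ ^ 2) := by
        rw [← ENNReal.ofReal_toReal hct] at hc
        exact (ENNReal.ofReal_lt_ofReal_iff_of_nonneg ENNReal.toReal_nonneg).1 hc
      set y := (c.toReal + σ / Real.sqrt (1 + σ ^ 2)) / 2 with hydef
      have hy0 : 0 < y := by
        have := ENNReal.toReal_nonneg (a := c); rw [hydef]; linarith
      have hy2 : y < σ / Real.sqrt (1 + σ ^ 2) := by rw [hydef]; linarith
      have hy1 : c.toReal < y := by rw [hydef]; linarith
      have hylt1 : y < 1 := hy2.trans (f_lt_one hσ0)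
      set δ' := y / Real.sqrt (1 - y ^ 2) with hδ'def
      have hδ'0 : 0 < δ' := g_pos hy0 hylt1
      have hδ'σ : δ' < σ := by
        by_contra hge
        push_neg at hge
        have := f_mono hσ0 hge
        rw [hδ'def, f_g hy0.le hylt1] at this
        linarith
      have hreg : IsDeltaRegular I x δ' := by
        apply reg_of_lt_slope
        rw [← ENNReal.ofReal_toReal hfin, ← hσdef]
        exact (ENNReal.ofReal_lt_ofReal_iff (lt_of_le_of_lt hδ'0.le hδ'σ |>.trans_le le_rfl)).2 hδ'σ
      have hregG := reg_epi_of_reg hI hδ'0 hreg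
      have hle := le_weakSlope (f_pos hδ'0) hregG
      calc c = ENNReal.ofReal c.toReal := (ENNReal.ofReal_toReal hct).symm
        _ < ENNReal.ofReal y := by
            exact (ENNReal.ofReal_lt_ofReal_iff hy0).2 hy1
        _ = ENNReal.ofReal (δ' / Real.sqrt (1 + δ' ^ 2)) := by
            rw [hδ'def, f_g hy0.le hylt1]
        _ ≤ _ := hle
  · -- infinite case
    intro htop
    apply le_antisymm
    · apply weakSlope_le
      intro ε hε0 hεr
      simpa using ENNReal.ofReal_le_ofReal (reg_le_one hε0 hεr)
    · refine le_of_forall_lt fun c hc => ?_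
      have hct : c ≠ ⊤ := (hc.trans_le le_top).ne
      have hcr : c.toReal < 1 := by
        have := (ENNReal.toReal_lt_toReal hct ENNReal.one_ne_top).2 hc
        simpa using this
      set y := (c.toReal + 1) / 2 with hydef
      have hc0 : (0:ℝ) ≤ c.toReal := ENNReal.toReal_nonneg
      have hy0 : 0 < y := by rw [hydef]; linarith
      have hy1 : c.toReal < y := by rw [hydef]; linarith
      have hylt1 : y < 1 := by rw [hydef]; linarith
      set δ' := y / Real.sqrt (1 - y ^ 2) with hδ'def
      have hδ'0 : 0 < δ' := g_pos hy0 hylt1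
      have hreg : IsDeltaRegular I x δ' := by
        apply reg_of_lt_slope
        rw [htop]
        exact ENNReal.ofReal_lt_top
      have hregG := reg_epi_of_reg hI hδ'0 hreg
      have hle := le_weakSlope (f_pos hδ'0) hregG
      calc c = ENNReal.ofReal c.toReal := (ENNReal.ofReal_toReal hct).symm
        _ < ENNReal.ofReal y := (ENNReal.ofReal_lt_ofReal_iff hy0).2 hy1
        _ = ENNReal.ofReal (δ' / Real.sqrt (1 + δ' ^ 2)) := by
            rw [hδ'def, f_g hy0.le hylt1]
        _ ≤ _ := hle
  · -- ξ > I x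
    intro ξ hξ
    have hreg := reg_epi_one hI hξ (show ((I x : ℝ) : EReal) ≤ ((ξ : ℝ) : EReal) from EReal.coe_le_coe_iff.2 hξ.le)
    apply le_antisymm
    · apply weakSlope_le
      intro ε hε0 hεr
      simpa using ENNReal.ofReal_le_ofReal (reg_le_one hε0 hεr)
    · simpa using le_weakSlope one_pos hreg
end

section
/- Let (X,d) be a metric space and I : X → ℝ ∪ {+∞} a proper lower semicontinuous functional. If x ∈ D(I) is not a local minimum of I and the metric slope |∂I|(x) is finite, then the metric slope of the epigraph extension G_I on (epi(I), d_epi) at the point (x, I(x)) satisfies |∂G_I|(x, I(x)) = |∂I|(x)/√(1 + |∂I|(x)²). -/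
open Set Metric Filter
open scoped ENNReal Topology

private lemma hfun_cont : Continuous fun r : ℝ => r / Real.sqrt (1 + r ^ 2) := by
  apply continuous_id'.div
  · exact Real.continuous_sqrt.comp (by continuity)
  · intro r; exact (Real.sqrt_pos.2 (by positivity)).ne'

private lemma hfun_mono {a t d : ℝ} (ha : 0 ≤ a) (ht : 0 ≤ t) (hd : 0 < d)
    (h : t ≤ a * d) : t / Real.sqrt (d ^ 2 + t ^ 2) ≤ a / Real.sqrt (1 + a ^ 2) := by
  have h1 : 0 < Real.sqrt (d ^ 2 + t ^ 2) := Real.sqrt_pos.2 (by positivity)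
  have h2 : 0 < Real.sqrt (1 + a ^ 2) := Real.sqrt_pos.2 (by positivity)
  rw [div_le_div_iff₀ h1 h2]
  have e1 : Real.sqrt (d ^ 2 + t ^ 2) ^ 2 = d ^ 2 + t ^ 2 := Real.sq_sqrt (by positivity)
  have e2 : Real.sqrt (1 + a ^ 2) ^ 2 = 1 + a ^ 2 := Real.sq_sqrt (by positivity)
  have key : (t * Real.sqrt (1 + a ^ 2)) ^ 2 ≤ (a * Real.sqrt (d ^ 2 + t ^ 2)) ^ 2 := by
    rw [mul_pow, mul_pow, e1, e2]; nlinarith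
  exact le_of_pow_le_pow_left₀ two_ne_zero (by positivity) key

private lemma withLp_dist_eq {X : Type*} [MetricSpace X] (p q : WithLp 2 (X × ℝ)) :
    dist p q = Real.sqrt (dist p.fst q.fst ^ 2 + (p.snd - q.snd) ^ 2) := by
  rw [WithLp.prod_dist_eq_add (by norm_num), Real.sqrt_eq_rpow]
  have : ((2:ℝ≥0∞)).toReal = (2:ℝ) := by norm_num
  rw [this, Real.dist_eq (p.snd) (q.snd)]
  rw [show ∀ x : ℝ, x ^ (2:ℝ) = x ^ (2:ℕ) from fun x => by rw [← Real.rpow_natCast x 2]; norm_num]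
  simp [sq_abs]

private lemma epi_dist_eq' {X : Type*} [MetricSpace X] {I : X → EReal} (p q : Epi I) :
    dist p q = Real.sqrt (dist (Epi.pt p) (Epi.pt q) ^ 2 + (epiExt I p - epiExt I q) ^ 2) := by
  rw [Subtype.dist_eq]
  exact withLp_dist_eq p.1 q.1

/-- If `x ∈ D(I)` is not a local minimum of the proper l.s.c. functional `I` and the metric
slope `|∂I|(x)` is finite, then the metric slope of the epigraph extension `G_I` at `(x, I(x))`
equals `|∂I|(x)/√(1 + |∂I|(x)²)`. -/
theorem metricSlope_epiExt_eq {X : Type*} [MetricSpace X] (I : X → EReal)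
    (hproper : ∃ x, I x ≠ ⊤) (hbot : ∀ x, I x ≠ ⊥) (hlsc : LowerSemicontinuous I)
    (x : X) (hx : I x ≠ ⊤)
    (hnotmin : ¬ IsLocalMin I x)
    (hfin : metricSlope I x ≠ ⊤) :
    metricSlopeReal (epiExt I)
        (Epi.mk' I x (I x).toReal (EReal.coe_toReal hx (hbot x)).ge)
      = ENNReal.ofReal
          ((metricSlope I x).toReal / Real.sqrt (1 + (metricSlope I x).toReal ^ 2)) := by
  classical
  set ξ : ℝ := (I x).toReal with hξdef
  have hIx : I x = (ξ : EReal) := (EReal.coe_toReal hx (hbot x)).symm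
  set p : Epi I := Epi.mk' I x ξ (EReal.coe_toReal hx (hbot x)).ge with hpdef
  set σ : ℝ := (metricSlope I x).toReal with hσdef
  have hσ0 : 0 ≤ σ := ENNReal.toReal_nonneg
  set g : X → ℝ≥0∞ := fun y => ENNReal.ofReal ((max (I x - I y) 0).toReal / dist x y) with hgdef
  have hslope' : limsup g (𝓝[≠] x) = ENNReal.ofReal σ := by
    have h1 : metricSlope I x = limsup g (𝓝[≠] x) := by
      rw [metricSlope, if_neg hx]
    rw [← h1, hσdef, ENNReal.ofReal_toReal hfin]
  have hptp : Epi.pt p = x := rfl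
  have hextp : epiExt I p = ξ := rfl
  set f : Epi I → ℝ≥0∞ :=
    fun q => ENNReal.ofReal (max (epiExt I p - epiExt I q) 0 / dist p q) with hfdef
  have hgoal : metricSlopeReal (epiExt I) p = limsup f (𝓝[≠] p) := rfl
  rw [hgoal]
  -- upper bound
  have upper : ∀ ε : ℝ, 0 < ε →
      limsup f (𝓝[≠] p) ≤ ENNReal.ofReal ((σ + ε) / Real.sqrt (1 + (σ + ε) ^ 2)) := by
    intro ε hε
    apply Filter.limsup_le_of_le (by isBoundedDefault)
    have hev : ∀ᶠ y in 𝓝[≠] x, g y < ENNReal.ofReal (σ + ε) :=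
      Filter.eventually_lt_of_limsup_lt (by
        rw [hslope']
        exact (ENNReal.ofReal_lt_ofReal_iff (by linarith)).2 (by linarith))
    obtain ⟨U, hUopen, hxU, hUsub⟩ := mem_nhdsWithin.1 hev
    have hpt_cont : Continuous fun q : Epi I => Epi.pt q := by
      exact continuous_fst.comp ((WithLp.prod_continuous_ofLp 2 X ℝ).comp continuous_subtype_val)
    have hUU : (fun q : Epi I => Epi.pt q) ⁻¹' U ∈ 𝓝 p :=
      hpt_cont.continuousAt.preimage_mem_nhds (hUopen.mem_nhds (by rw [hptp]; exact hxU))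
    filter_upwards [eventually_nhdsWithin_of_eventually_nhds
      (eventually_of_mem hUU fun q hq => hq), self_mem_nhdsWithin] with q hqU hqne
    set y : X := Epi.pt q with hydef
    set η : ℝ := epiExt I q with hηdef
    have hqepi : I y ≤ (η : EReal) := q.2
    rcases le_or_gt ξ η with hle | hlt
    · have : max (epiExt I p - epiExt I q) 0 = 0 := by
        rw [hextp, ← hηdef, max_eq_right (by linarith)]
      rw [hfdef]
      simp only [this, zero_div, ENNReal.ofReal_zero]
      exact zero_le
    · -- η < ξ
      have hIy_lt : I y < I x := lt_of_le_of_lt hqepi (by rw [hIx]; exact_mod_cast hlt)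
      have hyne : y ≠ x := fun h => absurd (h ▸ hIy_lt) (lt_irrefl _)
      have hyS : g y < ENNReal.ofReal (σ + ε) := hUsub ⟨hqU, hyne⟩
      have hd : 0 < dist x y := dist_pos.2 (Ne.symm hyne)
      have hIy_top : I y ≠ ⊤ := fun h => by
        rw [h] at hqepi; exact absurd hqepi (by simp)
      have hIy_eq : I y = (((I y).toReal : ℝ) : EReal) := (EReal.coe_toReal hIy_top (hbot y)).symm
      set μ : ℝ := (I y).toReal with hμdef
      have hμη : μ ≤ η := by rwa [hIy_eq, EReal.coe_le_coe_iff] at hqepi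
      have hmax : (max (I x - I y) 0).toReal = ξ - μ := by
        rw [hIx, hIy_eq, ← EReal.coe_sub]
        rw [max_eq_left (by exact_mod_cast (by linarith : (0:ℝ) ≤ ξ - μ))]
        exact EReal.toReal_coe _
      have hratio : (ξ - μ) / dist x y < σ + ε := by
        have hyS' : ENNReal.ofReal ((max (I x - I y) 0).toReal / dist x y)
            < ENNReal.ofReal (σ + ε) := hyS
        rw [hmax] at hyS'
        exact (ENNReal.ofReal_lt_ofReal_iff (by linarith)).1 hyS'
      have hbound : ξ - η ≤ (σ + ε) * dist x y := by
        have h1 : ξ - μ ≤ (σ + ε) * dist x y := by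
          rw [div_lt_iff₀ hd] at hratio; linarith
        linarith
      have hdistpq : dist p q = Real.sqrt (dist x y ^ 2 + (ξ - η) ^ 2) := by
        rw [epi_dist_eq' p q, hptp, hextp, ← hydef, ← hηdef]
      rw [hfdef]
      simp only
      rw [hextp, ← hηdef, max_eq_left (by linarith), hdistpq]
      exact ENNReal.ofReal_le_ofReal
        (hfun_mono (by linarith) (by linarith) hd hbound)
  have hupper : limsup f (𝓝[≠] p) ≤ ENNReal.ofReal (σ / Real.sqrt (1 + σ ^ 2)) := by
    apply ENNReal.le_of_forall_pos_le_add
    intro ε hε _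
    obtain ⟨δ, hδ, hδ2⟩ : ∃ δ > 0, (σ + δ) / Real.sqrt (1 + (σ + δ) ^ 2)
        ≤ σ / Real.sqrt (1 + σ ^ 2) + ε := by
      have hc : ContinuousAt (fun r : ℝ => r / Real.sqrt (1 + r ^ 2)) σ :=
        hfun_cont.continuousAt
      rw [Metric.continuousAt_iff] at hc
      obtain ⟨δ, hδpos, hδ⟩ := hc ε (by exact_mod_cast hε)
      refine ⟨δ / 2, by linarith, ?_⟩
      have := hδ (x := σ + δ / 2) (by rw [Real.dist_eq]; rw [abs_of_nonneg (by linarith)]; linarith)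
      rw [Real.dist_eq] at this
      have := abs_lt.1 this
      linarith [this.2]
    calc limsup f (𝓝[≠] p) ≤ ENNReal.ofReal ((σ + δ) / Real.sqrt (1 + (σ + δ) ^ 2)) :=
          upper δ hδ
      _ ≤ ENNReal.ofReal (σ / Real.sqrt (1 + σ ^ 2) + ε) := ENNReal.ofReal_le_ofReal hδ2
      _ ≤ ENNReal.ofReal (σ / Real.sqrt (1 + σ ^ 2)) + ENNReal.ofReal ε := ENNReal.ofReal_add_le
      _ = ENNReal.ofReal (σ / Real.sqrt (1 + σ ^ 2)) + ε := by
          rw [ENNReal.ofReal_coe_nnreal]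
  have hlower : ENNReal.ofReal (σ / Real.sqrt (1 + σ ^ 2)) ≤ limsup f (𝓝[≠] p) := by
    rcases eq_or_lt_of_le hσ0 with hσz | hσpos
    · simp [← hσz]
    · set δ : ℕ → ℝ := fun n => min (1/((n:ℝ)+1)) (σ/2) with hδdef
      have hδpos : ∀ n : ℕ, 0 < δ n := fun n => lt_min (by positivity) (by linarith)
      have hδσ : ∀ n, δ n ≤ σ/2 := fun n => min_le_right _ _
      have hδn : ∀ n, δ n ≤ 1/((n:ℝ)+1) := fun n => min_le_left _ _
      have hfreq : ∀ n : ℕ, ∃ y, y ≠ x ∧ dist x y < 1/((n:ℝ)+1) ∧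
          ENNReal.ofReal (σ - δ n) < g y ∧ g y < ENNReal.ofReal (σ + δ n) := by
        intro n
        have h1 : ∃ᶠ y in 𝓝[≠] x, ENNReal.ofReal (σ - δ n) < g y := by
          by_contra hcon
          rw [Filter.not_frequently] at hcon
          have hle : limsup g (𝓝[≠] x) ≤ ENNReal.ofReal (σ - δ n) :=
            Filter.limsup_le_of_le (by isBoundedDefault)
              (hcon.mono fun y hy => not_lt.1 hy)
          rw [hslope'] at hle
          have hlt : ENNReal.ofReal (σ - δ n) < ENNReal.ofReal σ :=
            (ENNReal.ofReal_lt_ofReal_iff hσpos).2 (by linarith [hδpos n])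
          exact absurd hle (not_le.2 hlt)
        have h2 : ∀ᶠ y in 𝓝[≠] x, g y < ENNReal.ofReal (σ + δ n) :=
          Filter.eventually_lt_of_limsup_lt (by
            rw [hslope']
            exact (ENNReal.ofReal_lt_ofReal_iff (by linarith [hδpos n])).2
              (by linarith [hδpos n]))
        have h3 : ∀ᶠ y in 𝓝[≠] x, dist x y < 1/((n:ℝ)+1) := by
          apply eventually_nhdsWithin_of_eventually_nhds
          filter_upwards [Metric.ball_mem_nhds x (show (0:ℝ) < 1/((n:ℝ)+1) by positivity)]
            with y hy
          rw [dist_comm]; exact hy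
        have h4 : ∀ᶠ y in 𝓝[≠] x, y ≠ x := eventually_mem_nhdsWithin
        obtain ⟨y, hlo, ⟨hhi, hdy⟩, hne⟩ := (h1.and_eventually ((h2.and h3).and h4)).exists
        exact ⟨y, hne, hdy, hlo, hhi⟩
      choose y hyne hydist hylo hyhi using hfreq
      set d : ℕ → ℝ := fun n => dist x (y n) with hddef
      have hdpos : ∀ n, 0 < d n := fun n => dist_pos.2 (Ne.symm (hyne n))
      set μ : ℕ → ℝ := fun n => (I (y n)).toReal with hμdef
      have hkey : ∀ n, I (y n) = ((μ n : ℝ) : EReal) ∧ μ n < ξ ∧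
          (max (I x - I (y n)) 0).toReal = ξ - μ n := by
        intro n
        have hlo := hylo n
        have hgy : g (y n)
            = ENNReal.ofReal ((max (I x - I (y n)) 0).toReal / dist x (y n)) := rfl
        have hgpos : 0 < (max (I x - I (y n)) 0).toReal / dist x (y n) := by
          by_contra hle
          push_neg at hle
          rw [hgy, ENNReal.ofReal_eq_zero.2 hle] at hlo
          exact absurd hlo (by simp)
        have hnum : 0 < (max (I x - I (y n)) 0).toReal := by
          rcases div_pos_iff.1 hgpos with ⟨h, _⟩ | ⟨_, h⟩
          · exact h
          · exact absurd h (not_lt.2 dist_nonneg)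
        have htop : I (y n) ≠ ⊤ := by
          intro h
          rw [h, EReal.sub_top] at hnum
          simp at hnum
        have heq : I (y n) = ((μ n : ℝ) : EReal) := (EReal.coe_toReal htop (hbot _)).symm
        have hmax : (max (I x - I (y n)) 0).toReal = max (ξ - μ n) 0 := by
          rw [hIx, heq, ← EReal.coe_sub]
          rcases le_total (ξ - μ n) 0 with h | h
          · rw [max_eq_right (by exact_mod_cast h), max_eq_right h]; simp
          · rw [max_eq_left (by exact_mod_cast h), max_eq_left h, EReal.toReal_coe]
        have hlt : μ n < ξ := by
          rw [hmax] at hnum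
          by_contra hcon
          push_neg at hcon
          rw [max_eq_right (by linarith)] at hnum
          exact lt_irrefl _ hnum
        exact ⟨heq, hlt, by rw [hmax, max_eq_left (by linarith)]⟩
      set r : ℕ → ℝ := fun n => (ξ - μ n) / d n with hrdef
      have hgy : ∀ n, g (y n) = ENNReal.ofReal (r n) := by
        intro n
        show ENNReal.ofReal ((max (I x - I (y n)) 0).toReal / dist x (y n)) = _
        rw [(hkey n).2.2]
      have hrlo : ∀ n, σ - δ n < r n := fun n =>
        (ENNReal.ofReal_lt_ofReal_iff_of_nonneg (by linarith [hδσ n])).1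
          (by rw [← hgy n]; exact hylo n)
      have hrpos : ∀ n, 0 < r n := fun n => lt_of_le_of_lt (by linarith [hδσ n]) (hrlo n)
      have hrhi : ∀ n, r n < σ + δ n := fun n =>
        (ENNReal.ofReal_lt_ofReal_iff_of_nonneg (hrpos n).le).1
          (by rw [← hgy n]; exact hyhi n)
      have hb : Tendsto (fun n : ℕ => 1/((n:ℝ)+1)) atTop (𝓝 0) :=
        tendsto_one_div_add_atTop_nhds_zero_nat
      have hrten : Tendsto r atTop (𝓝 σ) := by
        apply tendsto_of_tendsto_of_tendsto_of_le_of_le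
          (g := fun n : ℕ => σ - 1/((n:ℝ)+1)) (h := fun n : ℕ => σ + 1/((n:ℝ)+1))
        · simpa using tendsto_const_nhds.sub hb
        · simpa using tendsto_const_nhds.add hb
        · intro n; have h1 := hrlo n; have h2 := hδn n; linarith
        · intro n; have h1 := hrhi n; have h2 := hδn n; linarith
      have hdten : Tendsto d atTop (𝓝 0) :=
        squeeze_zero (fun n => dist_nonneg) (fun n => (hydist n).le) hb
      set q : ℕ → Epi I := fun n => Epi.mk' I (y n) (μ n) (hkey n).1.le with hqdef
      have hqpt : ∀ n, Epi.pt (q n) = y n := fun n => rfl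
      have hqext : ∀ n, epiExt I (q n) = μ n := fun n => rfl
      have hdistn : ∀ n, dist p (q n) = d n * Real.sqrt (1 + r n ^ 2) := by
        intro n
        rw [epi_dist_eq' p (q n), hptp, hextp, hqpt n, hqext n]
        have hdn := hdpos n
        have hstep : d n * Real.sqrt (1 + r n ^ 2)
            = Real.sqrt (d n ^ 2 * (1 + r n ^ 2)) := by
          rw [Real.sqrt_mul (by positivity), Real.sqrt_sq hdn.le]
        rw [hstep]
        congr 1
        have hd0 : d n ≠ 0 := hdn.ne'
        have : dist x (y n) = d n := rfl
        rw [this, hrdef]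
        field_simp
      have hqten : Tendsto q atTop (𝓝[≠] p) := by
        rw [tendsto_nhdsWithin_iff]
        constructor
        · rw [tendsto_iff_dist_tendsto_zero]
          have hrw : (fun n => dist (q n) p) = fun n => d n * Real.sqrt (1 + r n ^ 2) := by
            funext n; rw [dist_comm, hdistn n]
          rw [hrw]
          have hs : Tendsto (fun n => Real.sqrt (1 + r n ^ 2)) atTop
              (𝓝 (Real.sqrt (1 + σ ^ 2))) :=
            (Real.continuous_sqrt.tendsto _).comp
              (((continuous_const.add (continuous_pow 2)).tendsto σ).comp hrten)
          simpa using hdten.mul hs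
        · apply Filter.Eventually.of_forall
          intro n hqp
          have hμξ : μ n = ξ := by
            have h1 : epiExt I (q n) = epiExt I p := by rw [hqp]
            rw [hqext n, hextp] at h1
            exact h1
          have := (hkey n).2.1
          rw [hμξ] at this
          exact lt_irrefl _ this
      have hfq : ∀ n, f (q n) = ENNReal.ofReal (r n / Real.sqrt (1 + r n ^ 2)) := by
        intro n
        show ENNReal.ofReal (max (epiExt I p - epiExt I (q n)) 0 / dist p (q n)) = _
        rw [hextp, hqext n, max_eq_left (by linarith [(hkey n).2.1]), hdistn n]
        congr 1
        rw [hrdef]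
        exact (div_div _ _ _).symm
      have hften : Tendsto (fun n => f (q n)) atTop
          (𝓝 (ENNReal.ofReal (σ / Real.sqrt (1 + σ ^ 2)))) := by
        simp only [hfq]
        exact (ENNReal.continuous_ofReal.tendsto _).comp ((hfun_cont.tendsto σ).comp hrten)
      calc ENNReal.ofReal (σ / Real.sqrt (1 + σ ^ 2))
          = limsup (fun n => f (q n)) atTop := (hften.limsup_eq).symm
        _ = limsup f (map q atTop) := rfl
        _ ≤ limsup f (𝓝[≠] p) := Filter.limsup_le_limsup_of_le hqten
  exact le_antisymm hupper hlower
end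

section
/- Let (X,d) be a complete geodesic metric space and I : X → ℝ ∪ {+∞} a proper, lower semicontinuous, λ-geodesically convex functional. Let μ, ν ∈ D(I), let Γ be the set of all continuous curves γ : [0,1] → X with γ(0) = μ and γ(1) = ν, define Υ(γ) = sup_{t∈[0,1]} I(γ(t)), and set c = inf_{γ∈Γ} Υ(γ) and c₁ = max{I(μ), I(ν)}. If c > c₁ and I satisfies the weak metric Palais–Smale condition, then c is a critical value of I: there exists η ∈ X with I(η) = c and |∂I|(η) = |dI|(η) = 0. (This is the abstract form of the paper's mountain pass theorem, which applies in particular to the Wasserstein space P₂(M) over a complete connected smooth Riemannian manifold M.) -/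
open Set Metric Filter
open scoped ENNReal Topology

section Aux
namespace MPAux

open Set Metric Filter
open scoped ENNReal Topology

variable {X : Type*} [MetricSpace X]

/-! ### Ekeland's variational principle -/

lemma my_ekeland {Y : Type*} [MetricSpace Y] [CompleteSpace Y]
    (J : Y → ℝ) (hJ : LowerSemicontinuous J) (m : ℝ) (hm : ∀ y, m ≤ J y)
    (κ : ℝ) (hκ : 0 < κ) (x : Y) :
    ∃ y, J y ≤ J x ∧ κ * dist x y ≤ J x - J y ∧
      ∀ w, J w ≤ J y - κ * dist y w → w = y := by
  classical
  set S : Y → Set Y := fun z => {w | J w ≤ J z - κ * dist z w} with hS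
  have hmem : ∀ z, z ∈ S z := by
    intro z; simp [hS]
  have hne : ∀ z, (J '' S z).Nonempty := fun z => ⟨J z, z, hmem z, rfl⟩
  have hbdd : ∀ z, BddBelow (J '' S z) := by
    intro z; exact ⟨m, by rintro a ⟨w, _, rfl⟩; exact hm w⟩
  have hstep : ∀ (k : ℕ) (z : Y), ∃ z', z' ∈ S z ∧
      J z' ≤ sInf (J '' S z) + (2:ℝ)⁻¹ ^ k := by
    intro k z
    have hlt : sInf (J '' S z) < sInf (J '' S z) + (2:ℝ)⁻¹ ^ k := by
      have : (0:ℝ) < (2:ℝ)⁻¹ ^ k := by positivity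
      linarith
    obtain ⟨a, ⟨w, hw, rfl⟩, hlt'⟩ := exists_lt_of_csInf_lt (hne z) hlt
    exact ⟨w, hw, le_of_lt hlt'⟩
  choose F hF1 hF2 using hstep
  set y : ℕ → Y := fun k => Nat.rec x (fun k z => F k z) k with hy
  have hy0 : y 0 = x := rfl
  have hysucc : ∀ k, y (k + 1) = F k (y k) := fun k => rfl
  have hchain : ∀ k, J (y (k+1)) ≤ J (y k) - κ * dist (y k) (y (k+1)) := by
    intro k; rw [hysucc k]; exact hF1 k (y k)
  have hinf : ∀ k, J (y (k+1)) ≤ sInf (J '' S (y k)) + (2:ℝ)⁻¹ ^ k := by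
    intro k; rw [hysucc k]; exact hF2 k (y k)
  have hmono : ∀ k, J (y (k+1)) ≤ J (y k) := by
    intro k
    have := hchain k
    nlinarith [dist_nonneg (x := y k) (y := y (k+1)), hκ.le]
  have hanti : Antitone (fun k => J (y k)) :=
    antitone_nat_of_succ_le hmono
  have htel : ∀ k l, k ≤ l → κ * dist (y k) (y l) ≤ J (y k) - J (y l) := by
    intro k l hkl
    induction l with
    | zero => simp_all
    | succ n ih =>
      rcases Nat.lt_or_ge k (n+1) with h | h
      · have hkn : k ≤ n := Nat.lt_succ_iff.mp h
        have h1 := ih hkn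
        have h2 := hchain n
        have h3 : dist (y k) (y (n+1)) ≤ dist (y k) (y n) + dist (y n) (y (n+1)) :=
          dist_triangle _ _ _
        nlinarith [hκ.le]
      · have : k = n + 1 := le_antisymm hkl h
        subst this; simp
  -- J ∘ y converges
  have hbddb : BddBelow (Set.range fun k => J (y k)) :=
    ⟨m, by rintro a ⟨k, rfl⟩; exact hm _⟩
  set ℓ : ℝ := ⨅ k, J (y k) with hl
  have hJtendsto : Tendsto (fun k => J (y k)) atTop (𝓝 ℓ) :=
    tendsto_atTop_ciInf hanti hbddb
  have hcauchyJ : CauchySeq (fun k => J (y k)) := hJtendsto.cauchySeq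
  have hcauchy : CauchySeq y := by
    rw [Metric.cauchySeq_iff]
    intro ε hε
    obtain ⟨N, hN⟩ := Metric.cauchySeq_iff.mp hcauchyJ (κ * ε) (by positivity)
    refine ⟨N, fun n hn m' hm' => ?_⟩
    rcases le_total m' n with h | h
    · have h1 := htel m' n h
      have h2 := hN m' hm' n hn
      rw [Real.dist_eq] at h2
      have h3 : |J (y m') - J (y n)| < κ * ε := h2
      have := abs_lt.mp h3
      rw [dist_comm]
      nlinarith
    · have h1 := htel n m' h
      have h2 := hN n hn m' hm'
      rw [Real.dist_eq] at h2
      have := abs_lt.mp h2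
      nlinarith
  obtain ⟨ystar, hystar⟩ := cauchySeq_tendsto_of_complete hcauchy
  have hJstar : J ystar ≤ ℓ := by
    by_contra h
    push_neg at h
    set b := (ℓ + J ystar) / 2 with hb
    have hb1 : b < J ystar := by simp [hb]; linarith
    have hb2 : ℓ < b := by simp [hb]; linarith
    have := hJ ystar b hb1
    have hev : ∀ᶠ k in atTop, b < J (y k) := hystar.eventually this
    have hev2 : ∀ᶠ k in atTop, J (y k) < b :=
      hJtendsto.eventually (Filter.Tendsto.eventually_lt_const hb2 tendsto_id)
    obtain ⟨k, h1, h2⟩ := (hev.and hev2).exists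
    linarith
  have hdstar : ∀ k, κ * dist (y k) ystar ≤ J (y k) - ℓ := by
    intro k
    have h1 : Tendsto (fun l => κ * dist (y k) (y l)) atTop (𝓝 (κ * dist (y k) ystar)) :=
      (tendsto_const_nhds.mul ((continuous_dist.comp
        (continuous_const.prodMk continuous_id)).continuousAt.tendsto.comp hystar))
    have h2 : Tendsto (fun l => J (y k) - J (y l)) atTop (𝓝 (J (y k) - ℓ)) :=
      tendsto_const_nhds.sub hJtendsto
    exact le_of_tendsto_of_tendsto h1 h2
      (eventually_atTop.mpr ⟨k, fun l hl => htel k l hl⟩)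
  have hstarS : ∀ k, J ystar ≤ J (y k) - κ * dist (y k) ystar := by
    intro k
    have := hdstar k
    linarith
  refine ⟨ystar, ?_, ?_, ?_⟩
  · calc J ystar ≤ ℓ := hJstar
      _ ≤ J (y 0) := ciInf_le hbddb 0
      _ = J x := by rw [hy0]
  · have := hstarS 0
    rw [hy0] at this
    linarith
  · intro w hw
    have hwS : ∀ k, w ∈ S (y k) := by
      intro k
      have h1 := hstarS k
      have h2 : dist (y k) w ≤ dist (y k) ystar + dist ystar w := dist_triangle _ _ _
      have : J w ≤ J (y k) - κ * dist (y k) w := by nlinarith [hκ.le]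
      exact this
    have hge : ∀ k, J (y (k+1)) - (2:ℝ)⁻¹ ^ k ≤ J w := by
      intro k
      have h1 : sInf (J '' S (y k)) ≤ J w := csInf_le (hbdd _) ⟨w, hwS k, rfl⟩
      have h2 := hinf k
      linarith
    have hlim : Tendsto (fun k => J (y (k+1)) - (2:ℝ)⁻¹ ^ k) atTop (𝓝 (ℓ - 0)) := by
      exact ((hJtendsto.comp (tendsto_add_atTop_nat 1)).sub
        (tendsto_pow_atTop_nhds_zero_of_lt_one (by norm_num) (by norm_num)))
    have hwge : ℓ ≤ J w := by
      have := le_of_tendsto hlim (Eventually.of_forall hge)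
      simpa using this
    have : κ * dist ystar w ≤ 0 := by
      have h1 : J w ≤ J ystar - κ * dist ystar w := hw
      linarith
    have hd0 : dist ystar w ≤ 0 := by
      by_contra hd
      push_neg at hd
      nlinarith
    have hzz : dist ystar w = 0 := le_antisymm hd0 dist_nonneg
    exact (dist_eq_zero.mp hzz).symm


/-! ### metric slope tools -/

variable (I : X → EReal)

lemma punctured_ball_mem {x : X} {r : ℝ} (hr : 0 < r) :
    ball x r ∩ {x}ᶜ ∈ 𝓝[≠] x :=
  Filter.inter_mem (mem_nhdsWithin_of_mem_nhds (ball_mem_nhds x hr)) self_mem_nhdsWithin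

lemma le_metricSlope {x : X} (hI : I x ≠ ⊤) {a : ℝ≥0∞}
    (h : ∀ r > 0, ∃ w, w ≠ x ∧ dist x w < r ∧
      a ≤ ENNReal.ofReal ((max (I x - I w) 0).toReal / dist x w)) :
    a ≤ metricSlope I x := by
  rw [metricSlope, if_neg hI]
  refine le_limsup_of_frequently_le ?_
  rw [frequently_iff]
  intro U hU
  rw [mem_nhdsWithin] at hU
  obtain ⟨t, ht, hxt, hsub⟩ := hU
  obtain ⟨r, hr, hball⟩ := Metric.isOpen_iff.mp ht x hxt
  obtain ⟨w, hw1, hw2, hw3⟩ := h r hr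
  exact ⟨w, hsub ⟨hball (by rwa [mem_ball, dist_comm]), hw1⟩, hw3⟩

lemma metricSlope_le {x : X} (hI : I x ≠ ⊤) {a : ℝ≥0∞}
    (h : ∀ᶠ w in 𝓝[≠] x, ENNReal.ofReal ((max (I x - I w) 0).toReal / dist x w) ≤ a) :
    metricSlope I x ≤ a := by
  rw [metricSlope, if_neg hI]
  exact limsup_le_of_le (by isBoundedDefault) h

lemma exists_descent_of_slope_gt {x : X} (hI : I x ≠ ⊤) {ε : ℝ} (hε : 0 < ε)
    (h : ENNReal.ofReal ε < metricSlope I x) {r : ℝ} (hr : 0 < r) :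
    ∃ w, w ≠ x ∧ dist x w < r ∧ ε * dist x w < (max (I x - I w) 0).toReal := by
  rw [metricSlope, if_neg hI] at h
  have hfreq : ∃ᶠ w in 𝓝[≠] x,
      ¬ (ENNReal.ofReal ((max (I x - I w) 0).toReal / dist x w) ≤ ENNReal.ofReal ε) := by
    by_contra hcon
    rw [not_frequently] at hcon
    have : limsup (fun y => ENNReal.ofReal ((max (I x - I y) 0).toReal / dist x y)) (𝓝[≠] x)
        ≤ ENNReal.ofReal ε := limsup_le_of_le (by isBoundedDefault)
      (hcon.mono (fun w hw => not_not.mp hw))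
    exact absurd h (not_lt.mpr this)
  obtain ⟨w, hwU, hw⟩ := frequently_iff.mp hfreq (punctured_ball_mem hr)
  rw [not_le] at hw
  have hlt : ε < (max (I x - I w) 0).toReal / dist x w := by
    rcases le_or_gt ((max (I x - I w) 0).toReal / dist x w) ε with hle | hlt
    · exact absurd (ENNReal.ofReal_le_ofReal hle) (not_le.mpr hw)
    · exact hlt
  have hd : 0 < dist x w := by
    rw [dist_pos]; exact fun hxy => hwU.2 (by simp [hxy.symm])
  refine ⟨w, hwU.2, by rw [dist_comm]; exact mem_ball.mp hwU.1, ?_⟩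
  calc ε * dist x w < (max (I x - I w) 0).toReal / dist x w * dist x w :=
        mul_lt_mul_of_pos_right hlt hd
    _ = (max (I x - I w) 0).toReal := by field_simp

lemma real_descent {x w : X} {a ε : ℝ} (hbot : ∀ z, I z ≠ ⊥) (hx : I x = (a : EReal))
    (hd : 0 < dist x w) (hw : ε * dist x w < (max (I x - I w) 0).toReal) (hε : 0 < ε) :
    ∃ b : ℝ, I w = (b : EReal) ∧ b < a - ε * dist x w := by
  have hpos : 0 < (max (I x - I w) 0).toReal := lt_of_le_of_lt (by positivity) hw
  have hwtop : I w ≠ ⊤ := by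
    intro htop
    rw [hx, htop, EReal.sub_top] at hw
    simp at hw
    nlinarith
  obtain ⟨b, hb⟩ : ∃ b : ℝ, I w = (b : EReal) :=
    ⟨(I w).toReal, (EReal.coe_toReal hwtop (hbot w)).symm⟩
  refine ⟨b, hb, ?_⟩
  rw [hx, hb] at hw
  have hmax : max ((a:EReal) - b) 0 = ((max (a - b) 0 : ℝ) : EReal) := by norm_cast
  rw [hmax, EReal.toReal_coe] at hw
  rcases le_or_gt (a - b) 0 with h | h
  · rw [max_eq_right h] at hw; nlinarith
  · rw [max_eq_left h.le] at hw; linarith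

end MPAux
end Aux
section Aux2
namespace MPAux
open Set Metric Filter
open scoped ENNReal Topology

variable {X : Type*} [MetricSpace X] {I : X → EReal} {lam : ℝ}

/-! ### convexity along geodesics -/

lemma conv_piece_bound (hconv : GeodesicallyConvex I lam)
    {x₀ x₁ : X} {a b : ℝ} (h₀ : I x₀ = (a : EReal)) (h₁ : I x₁ = (b : EReal))
    {γ : ℝ → X} (hγ : IsUnitSpeedGeodesic γ x₀ x₁) {t : ℝ} (ht : t ∈ Icc (0:ℝ) 1) :
    I (γ t) ≤ (((1-t)*a + t*b - lam/2*t*(1-t)*(dist x₀ x₁)^2 : ℝ) : EReal) := by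
  have h := hconv x₀ x₁ (by rw [h₀]; exact EReal.coe_ne_top a)
    (by rw [h₁]; exact EReal.coe_ne_top b) γ hγ t ht
  rw [h₀, h₁, ← EReal.coe_mul, ← EReal.coe_mul, ← EReal.coe_add, ← EReal.coe_sub] at h
  convert h using 3

lemma conv_piece_max (hconv : GeodesicallyConvex I lam)
    {x₀ x₁ : X} {a b M M' : ℝ} (h₀ : I x₀ = (a : EReal)) (h₁ : I x₁ = (b : EReal))
    (ha : a ≤ M) (hb : b ≤ M) (hM' : M + |lam|/8 * (dist x₀ x₁)^2 ≤ M')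
    {γ : ℝ → X} (hγ : IsUnitSpeedGeodesic γ x₀ x₁) {t : ℝ} (ht : t ∈ Icc (0:ℝ) 1) :
    I (γ t) ≤ ((M' : ℝ) : EReal) := by
  refine le_trans (conv_piece_bound hconv h₀ h₁ hγ ht) (EReal.coe_le_coe_iff.mpr ?_)
  obtain ⟨ht0, ht1⟩ := ht
  have h1 : 0 ≤ t * (1 - t) := by nlinarith
  have h2 : t * (1 - t) ≤ 1/4 := by nlinarith [sq_nonneg (t - 1/2)]
  have h3 : -lam ≤ |lam| := neg_le_abs lam
  have h4 : lam ≤ |lam| := le_abs_self lam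
  have h5 : (0:ℝ) ≤ (dist x₀ x₁)^2 := sq_nonneg _
  have h6 : (0:ℝ) ≤ |lam| := abs_nonneg lam
  nlinarith [mul_le_mul_of_nonneg_right h2 h5, mul_nonneg h1 h5]

/-- Lower bound on the metric slope from geodesic convexity: global slope estimate. -/
lemma slope_ge_conv (hgeo : IsGeodesicSpace X) (hconv : GeodesicallyConvex I lam)
    (hbot : ∀ z, I z ≠ ⊥) {u y : X} (hne : y ≠ u) {a b : ℝ}
    (hu : I u = (a : EReal)) (hy : I y = (b : EReal)) :
    ENNReal.ofReal ((a - b)/dist u y + lam/2 * dist u y) ≤ metricSlope I u := by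
  set d : ℝ := dist u y with hdd
  have hd : 0 < d := dist_pos.mpr (fun h => hne h.symm)
  set T : ℝ := (a - b)/d + lam/2 * d with hT
  rcases le_or_gt T 0 with hT0 | hT0
  · rw [ENNReal.ofReal_eq_zero.mpr hT0]; exact zero_le
  have key : ∀ θ : ℝ, 0 < θ → ENNReal.ofReal (T - θ) ≤ metricSlope I u := by
    intro θ hθ
    rcases le_or_gt (T - θ) 0 with hneg | hpos
    · rw [ENNReal.ofReal_eq_zero.mpr hneg]; exact zero_le
    refine le_metricSlope I (by rw [hu]; exact EReal.coe_ne_top a) ?_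
    intro r hr
    obtain ⟨γ, hγ⟩ := hgeo u y
    set t : ℝ := min 1 (min (r/(2*d)) (θ/(|lam|/2*d + 1))) with htdef
    have ht0 : 0 < t := by
      refine lt_min one_pos (lt_min (by positivity) (by positivity))
    have ht1 : t ≤ 1 := min_le_left _ _
    have htr : t * d < r := by
      have h1 : t ≤ r/(2*d) := le_trans (min_le_right _ _) (min_le_left _ _)
      calc t * d ≤ r/(2*d) * d := by nlinarith
        _ = r / 2 := by field_simp
        _ < r := by linarith
    have htθ : |lam|/2 * t * d ≤ θ := by
      have h1 : t ≤ θ/(|lam|/2*d + 1) := le_trans (min_le_right _ _) (min_le_right _ _)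
      have h2 : (0:ℝ) ≤ |lam|/2*d := by positivity
      have h3 : t * (|lam|/2*d + 1) ≤ θ := (le_div_iff₀ (by positivity)).mp h1
      nlinarith
    set w : X := γ t with hwdef
    have htIcc : t ∈ Icc (0:ℝ) 1 := ⟨ht0.le, ht1⟩
    have hdw : dist u w = t * d := by
      have h := hγ.2.2.2 0 ⟨le_refl 0, zero_le_one⟩ t htIcc
      rw [hγ.2.1] at h
      rw [hwdef, h, zero_sub, abs_neg, abs_of_nonneg ht0.le, hdd]
    have hwne : w ≠ u := by
      refine fun hwu => ?_
      rw [hwu, dist_self] at hdw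
      nlinarith
    have hIw := conv_piece_bound hconv hu hy hγ htIcc
    have hIwtop : I w ≠ ⊤ := fun htop => by
      rw [hwdef] at htop
      rw [htop] at hIw
      exact (EReal.coe_ne_top _) (top_le_iff.mp hIw)
    obtain ⟨bw, hbw⟩ : ∃ bw : ℝ, I w = (bw : EReal) :=
      ⟨(I w).toReal, (EReal.coe_toReal hIwtop (hbot w)).symm⟩
    have hbw_le : bw ≤ (1-t)*a + t*b - lam/2*t*(1-t)*d^2 := by
      rw [hwdef] at hbw
      rw [hbw] at hIw
      exact EReal.coe_le_coe_iff.mp hIw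
    have hmax : (max (I u - I w) 0).toReal = max (a - bw) 0 := by
      rw [hu, hbw, ← EReal.coe_sub]
      norm_cast
    have hTd : T * d = (a - b) + lam/2*d^2 := by
      rw [hT]; field_simp
    have hratio : T - θ ≤ (max (I u - I w) 0).toReal / dist u w := by
      rw [hmax, hdw, le_div_iff₀ (by positivity)]
      have h1 : a - bw ≤ max (a - bw) 0 := le_max_left _ _
      have e2 : t*(a-b) + lam/2*t*(1-t)*d^2 ≤ a - bw := by nlinarith [hbw_le]
      have hl : lam ≤ |lam| := le_abs_self lam
      have e3a : (|lam|/2*t*d)*(t*d) ≤ θ*(t*d) :=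
        mul_le_mul_of_nonneg_right htθ (mul_pos ht0 hd).le
      have e3b : (0:ℝ) ≤ (|lam| - lam) * (t*d)^2 :=
        mul_nonneg (by linarith) (sq_nonneg _)
      have e3 : lam/2*t*t*d^2 ≤ θ*(t*d) := by nlinarith [e3a, e3b]
      have e4 : (T-θ)*(t*d) = t*(a-b) + lam/2*t*d^2 - θ*(t*d) := by
        rw [show (T-θ)*(t*d) = t*(T*d) - θ*(t*d) by ring, hTd]; ring
      calc (T-θ)*(t*d) = t*(a-b) + lam/2*t*d^2 - θ*(t*d) := e4
        _ ≤ t*(a-b) + lam/2*t*d^2 - lam/2*t*t*d^2 := by linarith [e3]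
        _ = t*(a-b) + lam/2*t*(1-t)*d^2 := by ring
        _ ≤ a - bw := e2
        _ ≤ max (a-bw) 0 := h1
    exact ⟨w, hwne, lt_of_le_of_lt (le_of_eq hdw) htr, ENNReal.ofReal_le_ofReal hratio⟩
  -- limit as θ → 0
  have hlim : Tendsto (fun n : ℕ => ENNReal.ofReal (T - 1/(n+1))) atTop
      (𝓝 (ENNReal.ofReal T)) := by
    have h1 : Tendsto (fun n : ℕ => T - 1/(n+1)) atTop (𝓝 (T - 0)) :=
      tendsto_const_nhds.sub tendsto_one_div_add_atTop_nhds_zero_nat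
    rw [sub_zero] at h1
    exact ENNReal.tendsto_ofReal h1
  exact le_of_tendsto' hlim (fun n => key _ (by positivity))

end MPAux
end Aux2
section Aux3
namespace MPAux
open Set Metric Filter
open scoped ENNReal Topology

variable {X : Type*} [MetricSpace X] {I : X → EReal} {lam : ℝ}

lemma ne_top_of_le_coe {x : EReal} {v : ℝ} (h : x ≤ (v : EReal)) : x ≠ ⊤ :=
  fun ht => EReal.coe_ne_top v (top_le_iff.mp (ht ▸ h))

lemma eq_coe_toReal {x : EReal} (h1 : x ≠ ⊤) (h2 : x ≠ ⊥) : x = ((x.toReal : ℝ) : EReal) :=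
  (EReal.coe_toReal h1 h2).symm

/-! ### clamped functional -/

/-- The clamp of `I` to `[A, B]`, as a real valued function. -/
noncomputable def clampI (I : X → EReal) (A B : ℝ) : X → ℝ :=
  fun w => ((I w ⊓ (B : EReal)) ⊔ (A : EReal)).toReal

lemma clampI_ne_top (w : X) (A B : ℝ) (hAB : A ≤ B) :
    (I w ⊓ (B : EReal)) ⊔ (A : EReal) ≠ ⊤ :=
  ne_top_of_le_coe (v := B) (sup_le (le_trans inf_le_right le_rfl)
    (EReal.coe_le_coe_iff.mpr hAB))

lemma clampI_ne_bot (w : X) (A B : ℝ) :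
    (I w ⊓ (B : EReal)) ⊔ (A : EReal) ≠ ⊥ :=
  fun h => EReal.coe_ne_bot A (bot_unique (h ▸ le_sup_right))

lemma clampI_ge (w : X) (A B : ℝ) (hAB : A ≤ B) : A ≤ clampI I A B w := by
  have h : ((A : ℝ) : EReal) ≤ (I w ⊓ (B : EReal)) ⊔ (A : EReal) := le_sup_right
  have := EReal.toReal_le_toReal h (EReal.coe_ne_bot A) (clampI_ne_top w A B hAB)
  simpa [clampI] using this

lemma clampI_eq {w : X} {v A B : ℝ} (hw : I w = (v : EReal)) (h1 : A ≤ v) (h2 : v ≤ B) :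
    clampI I A B w = v := by
  rw [clampI, hw]
  have e1 : ((v:EReal) ⊓ (B:EReal)) = ((v:EReal)) := inf_eq_left.mpr (EReal.coe_le_coe_iff.mpr h2)
  rw [e1]
  have e2 : ((v:EReal) ⊔ (A:EReal)) = ((v:EReal)) := sup_eq_left.mpr (EReal.coe_le_coe_iff.mpr h1)
  rw [e2, EReal.toReal_coe]

lemma clampI_le_of_le {w : X} {v A B : ℝ} (hw : I w ≤ (v : EReal)) (h1 : A ≤ v) (h2 : v ≤ B) :
    clampI I A B w ≤ v := by
  have h : (I w ⊓ (B : EReal)) ⊔ (A : EReal) ≤ ((v : ℝ) : EReal) :=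
    sup_le (le_trans inf_le_left hw) (EReal.coe_le_coe_iff.mpr h1)
  have := EReal.toReal_le_toReal h (clampI_ne_bot w A B) (EReal.coe_ne_top v)
  simpa [clampI] using this

lemma clampI_eq_B {w : X} {A B : ℝ} (hw : ((B:ℝ) : EReal) ≤ I w) (hAB : A ≤ B) :
    clampI I A B w = B := by
  rw [clampI]
  have e1 : (I w ⊓ (B:EReal)) = ((B:ℝ):EReal) := inf_eq_right.mpr hw
  rw [e1]
  have e2 : (((B:ℝ):EReal) ⊔ (A:EReal)) = ((B:ℝ):EReal) := sup_eq_left.mpr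
    (EReal.coe_le_coe_iff.mpr hAB)
  rw [e2, EReal.toReal_coe]

lemma clampI_lsc (hlsc : LowerSemicontinuous I) (A B : ℝ) (hAB : A ≤ B) :
    LowerSemicontinuous (clampI I A B) := by
  intro x r hr
  rcases lt_or_ge r A with hrA | hrA
  · exact Eventually.of_forall fun y => lt_of_lt_of_le hrA (clampI_ge y A B hAB)
  · -- A ≤ r < clampI x
    have hx_ne_top := clampI_ne_top (I := I) x A B hAB
    have hx_ne_bot := clampI_ne_bot (I := I) x A B
    have hcoe : ((r:ℝ):EReal) < (I x ⊓ (B:EReal)) ⊔ (A:EReal) := by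
      have h' := EReal.coe_lt_coe_iff.mpr hr
      simp only [clampI] at h'
      rwa [← eq_coe_toReal hx_ne_top hx_ne_bot] at h'
    rcases lt_sup_iff.mp hcoe with h | h
    · obtain ⟨h1, h2⟩ := lt_inf_iff.mp h
      filter_upwards [hlsc x ((r:ℝ):EReal) h1] with y hy
      have hgy : ((r:ℝ):EReal) < (I y ⊓ (B:EReal)) ⊔ (A:EReal) :=
        lt_of_lt_of_le (lt_inf_iff.mpr ⟨hy, h2⟩) le_sup_left
      have hy_ne_top := clampI_ne_top (I := I) y A B hAB
      have hy_ne_bot := clampI_ne_bot (I := I) y A B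
      rw [eq_coe_toReal hy_ne_top hy_ne_bot] at hgy
      have := EReal.coe_lt_coe_iff.mp hgy
      simpa [clampI] using this
    · exact absurd (EReal.coe_lt_coe_iff.mp h) (not_lt.mpr hrA)

/-! ### paths -/

lemma path_clamp {γ : ℝ → X} (h : ContinuousOn γ (Icc 0 1)) :
    ∃ γ' : ℝ → X, Continuous γ' ∧ γ' 0 = γ 0 ∧ γ' 1 = γ 1 ∧
      ∀ t ∈ Icc (0:ℝ) 1, γ' t = γ t := by
  refine ⟨fun t => γ (max 0 (min 1 t)), ?_, ?_, ?_, ?_⟩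
  · refine h.comp_continuous (continuous_const.max (continuous_const.min continuous_id))
      (fun x => ⟨le_max_left _ _, ?_⟩)
    exact max_le zero_le_one (min_le_left _ _)
  · norm_num
  · norm_num
  · intro t ht
    show γ (max 0 (min 1 t)) = γ t
    rw [min_eq_right ht.2, max_eq_right ht.1]

lemma path_concat {p q r : X} {P : X → Prop}
    (h1 : ∃ γ : ℝ → X, Continuous γ ∧ γ 0 = p ∧ γ 1 = q ∧ ∀ t ∈ Icc (0:ℝ) 1, P (γ t))
    (h2 : ∃ γ : ℝ → X, Continuous γ ∧ γ 0 = q ∧ γ 1 = r ∧ ∀ t ∈ Icc (0:ℝ) 1, P (γ t)) :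
    ∃ γ : ℝ → X, Continuous γ ∧ γ 0 = p ∧ γ 1 = r ∧ ∀ t ∈ Icc (0:ℝ) 1, P (γ t) := by
  obtain ⟨γ₁, hc1, h10, h11, hP1⟩ := h1
  obtain ⟨γ₂, hc2, h20, h21, hP2⟩ := h2
  refine ⟨fun t => if t ≤ 1/2 then γ₁ (2*t) else γ₂ (2*t - 1), ?_, ?_, ?_, ?_⟩
  · refine Continuous.if_le (hc1.comp (by continuity)) (hc2.comp (by continuity))
      continuous_id continuous_const (fun x hx => ?_)
    rw [hx]
    norm_num
    rw [h11, ← h20]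
  · norm_num [h10]
  · norm_num [h21]
  · intro t ht
    show P (if t ≤ 1/2 then γ₁ (2*t) else γ₂ (2*t - 1))
    by_cases h : t ≤ 1/2
    · rw [if_pos h]
      exact hP1 _ ⟨by linarith [ht.1], by linarith⟩
    · rw [if_neg h]
      push_neg at h
      exact hP2 _ ⟨by linarith, by linarith [ht.2]⟩

lemma geodesic_piece (hgeo : IsGeodesicSpace X) (hconv : GeodesicallyConvex I lam)
    {x₀ x₁ : X} {a b M M' : ℝ} (h₀ : I x₀ = (a : EReal)) (h₁ : I x₁ = (b : EReal))
    (ha : a ≤ M) (hb : b ≤ M) (hM' : M + |lam|/8 * (dist x₀ x₁)^2 ≤ M') :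
    ∃ γ : ℝ → X, Continuous γ ∧ γ 0 = x₀ ∧ γ 1 = x₁ ∧
      ∀ t ∈ Icc (0:ℝ) 1, I (γ t) ≤ ((M' : ℝ) : EReal) := by
  obtain ⟨g, hg⟩ := hgeo x₀ x₁
  obtain ⟨γ', hcont, hg0, hg1, heq⟩ := path_clamp hg.1
  refine ⟨γ', hcont, by rw [hg0, hg.2.1], by rw [hg1, hg.2.2.1], fun t ht => ?_⟩
  rw [heq t ht]
  exact conv_piece_max hconv h₀ h₁ ha hb hM' hg ht

lemma chain_path (hgeo : IsGeodesicSpace X) (hconv : GeodesicallyConvex I lam)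
    (hbot : ∀ z, I z ≠ ⊥) (z : ℕ → X) (M M' : ℝ) (hMM' : M ≤ M') (n : ℕ)
    (hval : ∀ i ≤ n, I (z i) ≤ ((M : ℝ) : EReal))
    (hpen : ∀ i < n, |lam|/8 * (dist (z i) (z (i+1)))^2 ≤ M' - M) :
    ∃ γ : ℝ → X, Continuous γ ∧ γ 0 = z 0 ∧ γ 1 = z n ∧
      ∀ t ∈ Icc (0:ℝ) 1, I (γ t) ≤ ((M' : ℝ) : EReal) := by
  induction n with
  | zero =>
    refine ⟨fun _ => z 0, continuous_const, rfl, rfl, fun t _ => ?_⟩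
    exact le_trans (hval 0 le_rfl) (EReal.coe_le_coe_iff.mpr hMM')
  | succ n ih =>
    have hbase := ih (fun i hi => hval i (le_trans hi (Nat.le_succ n)))
      (fun i hi => hpen i (Nat.lt_succ_of_lt hi))
    have hzn_top : I (z n) ≠ ⊤ := ne_top_of_le_coe (hval n (Nat.le_succ n))
    have hzn1_top : I (z (n+1)) ≠ ⊤ := ne_top_of_le_coe (hval (n+1) le_rfl)
    have ha : I (z n) = (((I (z n)).toReal : ℝ) : EReal) := eq_coe_toReal hzn_top (hbot _)
    have hb : I (z (n+1)) = (((I (z (n+1))).toReal : ℝ) : EReal) :=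
      eq_coe_toReal hzn1_top (hbot _)
    have haM : (I (z n)).toReal ≤ M := by
      have := hval n (Nat.le_succ n)
      rw [ha] at this
      exact EReal.coe_le_coe_iff.mp this
    have hbM : (I (z (n+1))).toReal ≤ M := by
      have := hval (n+1) le_rfl
      rw [hb] at this
      exact EReal.coe_le_coe_iff.mp this
    have hpiece := geodesic_piece hgeo hconv (M := M) (M' := M') ha hb haM hbM
      (by linarith [hpen n (Nat.lt_succ_self n)])
    exact path_concat (P := fun x => I x ≤ ((M' : ℝ) : EReal)) hbase hpiece
end MPAux
end Aux3
section Aux4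
namespace MPAux
open Set Metric Filter
open scoped ENNReal Topology

variable {X : Type*} [MetricSpace X] {I : X → EReal}

lemma epiExt_mk' {x : X} {ξ : ℝ} (h : I x ≤ (ξ : EReal)) :
    epiExt I (Epi.mk' I x ξ h) = ξ := rfl

lemma pt_mk' {x : X} {ξ : ℝ} (h : I x ≤ (ξ : EReal)) :
    (Epi.mk' I x ξ h).pt = x := rfl

lemma epi_mem (q : Epi I) : I q.pt ≤ ((epiExt I q : ℝ) : EReal) := q.2

lemma epi_dist_pt (p q : Epi I) : dist p.pt q.pt ≤ dist p q := by
  rw [Subtype.dist_eq]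
  rw [WithLp.prod_dist_eq_add (by norm_num : 0 < (2 : ℝ≥0∞).toReal)]
  have h2 : (2 : ℝ≥0∞).toReal = (2:ℝ) := by norm_num
  rw [h2]
  have hd1 : (0:ℝ) ≤ dist (p.1.fst) (q.1.fst) := dist_nonneg
  have hd2 : (0:ℝ) ≤ dist (p.1.snd) (q.1.snd) := dist_nonneg
  have e1 : dist (p.1.fst) (q.1.fst) ^ (2:ℝ) = dist (p.1.fst) (q.1.fst) ^ (2:ℕ) := by
    rw [← Real.rpow_natCast (dist (p.1.fst) (q.1.fst)) 2]; norm_num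
  have e2 : dist (p.1.snd) (q.1.snd) ^ (2:ℝ) = dist (p.1.snd) (q.1.snd) ^ (2:ℕ) := by
    rw [← Real.rpow_natCast (dist (p.1.snd) (q.1.snd)) 2]; norm_num
  rw [e1, e2]
  have hsum : (0:ℝ) ≤ dist (p.1.fst) (q.1.fst) ^ (2:ℕ) + dist (p.1.snd) (q.1.snd) ^ (2:ℕ) := by
    positivity
  rw [← Real.sqrt_eq_rpow]
  have : dist p.pt q.pt = dist (p.1.fst) (q.1.fst) := rfl
  rw [this]
  exact (Real.le_sqrt hd1 hsum).mpr (by nlinarith)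

lemma slope_ge_of_regular (hbot : ∀ z, I z ≠ ⊥) {x : X} {ξ : ℝ}
    (hx : I x = (ξ : EReal)) {δ : ℝ} (hδ : 0 < δ)
    (hreg : IsDeltaRegular (epiExt I) (Epi.mk' I x ξ hx.le) δ) :
    ENNReal.ofReal δ ≤ metricSlope I x := by
  obtain ⟨U, hU, α, hα, ψ, hcont, hprop⟩ := hreg
  refine le_metricSlope I (by rw [hx]; exact EReal.coe_ne_top ξ) ?_
  intro r hr
  set p₀ : Epi I := Epi.mk' I x ξ hx.le with hp₀
  have hp₀U : p₀ ∈ U := mem_of_mem_nhds hU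
  set t : ℝ := min α (r/2) with htdef
  have ht0 : 0 < t := lt_min hα (by positivity)
  have htα : t ≤ α := min_le_left _ _
  have htr : t < r := lt_of_le_of_lt (min_le_right _ _) (by linarith)
  obtain ⟨hd, hdec⟩ := hprop p₀ hp₀U t ⟨ht0.le, htα⟩
  set q : Epi I := ψ p₀ t with hq
  set w : X := q.pt with hw
  have hdw : dist w x ≤ t := by
    calc dist w x = dist q.pt p₀.pt := rfl
      _ ≤ dist q p₀ := epi_dist_pt q p₀
      _ ≤ t := hd
  have hext : epiExt I q ≤ ξ - δ * t := by
    have : epiExt I p₀ = ξ := rfl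
    linarith [hdec, this.symm ▸ hdec]
  have hIw : I w ≤ ((ξ - δ * t : ℝ) : EReal) :=
    le_trans (epi_mem q) (EReal.coe_le_coe_iff.mpr hext)
  have hwx : w ≠ x := by
    intro h
    rw [h, hx] at hIw
    have := EReal.coe_le_coe_iff.mp hIw
    nlinarith
  have hdpos : 0 < dist x w := dist_pos.mpr (fun h => hwx h.symm)
  have hIw_top : I w ≠ ⊤ := ne_top_of_le_coe hIw
  obtain ⟨bw, hbw⟩ : ∃ bw : ℝ, I w = (bw : EReal) :=
    ⟨(I w).toReal, (EReal.coe_toReal hIw_top (hbot w)).symm⟩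
  have hbw_le : bw ≤ ξ - δ * t := EReal.coe_le_coe_iff.mp (hbw ▸ hIw)
  have hmax : (max (I x - I w) 0).toReal = max (ξ - bw) 0 := by
    rw [hx, hbw, ← EReal.coe_sub]
    norm_cast
  refine ⟨w, hwx, by rw [dist_comm]; exact lt_of_le_of_lt hdw htr, ?_⟩
  refine ENNReal.ofReal_le_ofReal ?_
  rw [hmax]
  rw [le_div_iff₀ hdpos]
  have h1 : δ * t ≤ ξ - bw := by nlinarith
  have h2 : dist x w ≤ t := by rwa [dist_comm]
  calc δ * dist x w ≤ δ * t := by nlinarith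
    _ ≤ ξ - bw := h1
    _ ≤ max (ξ - bw) 0 := le_max_left _ _

lemma lscWeakSlope_le_bound (hbot : ∀ z, I z ≠ ⊥) {x : X} (hxt : I x ≠ ⊤) {ε : ℝ}
    (hε0 : 0 < ε) (hε1 : ε < 1) (hs : metricSlope I x ≤ ENNReal.ofReal ε) :
    lscWeakSlope I x ≤ ENNReal.ofReal (ε / Real.sqrt (1 - ε^2)) := by
  have hx : I x = (((I x).toReal : ℝ) : EReal) := eq_coe_toReal hxt (hbot x)
  have h1 : I x ≤ (((I x).toReal : ℝ) : EReal) := hx.le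
  rw [lscWeakSlope, dif_pos h1]
  simp only
  set s := weakSlope (epiExt I) (Epi.mk' I x (I x).toReal h1) with hsdef
  have hsle : s ≤ ENNReal.ofReal ε := by
    rw [hsdef, weakSlope]
    refine iSup₂_le fun δ hδ => ?_
    exact le_trans (slope_ge_of_regular hbot hx hδ.1 hδ.2) hs
  have hslt : s < 1 := lt_of_le_of_lt hsle (ENNReal.ofReal_lt_one.mpr hε1)
  rw [if_pos hslt]
  have hsT : s.toReal ≤ ε := ENNReal.toReal_le_of_le_ofReal hε0.le hsle
  have hsT0 : 0 ≤ s.toReal := ENNReal.toReal_nonneg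
  have hden : (0:ℝ) < Real.sqrt (1 - ε^2) := Real.sqrt_pos.mpr (by nlinarith)
  have hden2 : Real.sqrt (1 - ε^2) ≤ Real.sqrt (1 - s.toReal^2) :=
    Real.sqrt_le_sqrt (by nlinarith)
  exact ENNReal.ofReal_le_ofReal (div_le_div₀ hε0.le hsT hden hden2)

lemma lscWeakSlope_eq_zero (hbot : ∀ z, I z ≠ ⊥) {x : X} (hxt : I x ≠ ⊤)
    (hs : metricSlope I x = 0) : lscWeakSlope I x = 0 := by
  have hx : I x = (((I x).toReal : ℝ) : EReal) := eq_coe_toReal hxt (hbot x)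
  have h1 : I x ≤ (((I x).toReal : ℝ) : EReal) := hx.le
  rw [lscWeakSlope, dif_pos h1]
  simp only
  set s := weakSlope (epiExt I) (Epi.mk' I x (I x).toReal h1) with hsdef
  have hs0 : s = 0 := by
    refine le_antisymm ?_ (zero_le)
    rw [hsdef, weakSlope]
    refine iSup₂_le fun δ hδ => ?_
    have := le_trans (slope_ge_of_regular hbot hx hδ.1 hδ.2) hs.le
    exact this
  have hslt : s < 1 := by rw [hs0]; norm_num
  rw [if_pos hslt, hs0]
  simp

end MPAux
end Aux4
section Aux5
namespace MPAux
open Set Metric Filter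
open scoped ENNReal Topology

variable {X : Type*} [MetricSpace X] {I : X → EReal} {lam : ℝ}

set_option maxHeartbeats 1000000 in
lemma exists_band_point [CompleteSpace X]
    (hgeo : IsGeodesicSpace X) (hbot : ∀ z, I z ≠ ⊥) (hlsc : LowerSemicontinuous I)
    (hconv : GeodesicallyConvex I lam)
    {μ ν : X} {cb cb1 : ℝ}
    (hμ : I μ ≤ ((cb1 : ℝ) : EReal)) (hν : I ν ≤ ((cb1 : ℝ) : EReal))
    (hcinf : sInf {a : EReal | ∃ γ : ℝ → X, ContinuousOn γ (Icc 0 1) ∧ γ 0 = μ ∧ γ 1 = ν ∧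
        a = ⨆ t ∈ Icc (0:ℝ) 1, I (γ t)} = ((cb : ℝ) : EReal))
    {ε ρ : ℝ} (hε : 0 < ε) (hρ : 0 < ρ)
    (hρ1 : cb1 < cb - ρ/2)
    (hρ2 : |lam|/8 * (8*ρ/ε + 3*ρ)^2 ≤ ρ/4) :
    ∃ (u : X) (a : ℝ), I u = (a : EReal) ∧ cb - ρ ≤ a ∧ a ≤ cb + ρ ∧
      metricSlope I u ≤ ENNReal.ofReal ε := by
  by_contra hcon
  push_neg at hcon
  -- hcon : ∀ u a, I u = a → cb - ρ ≤ a → a ≤ cb + ρ → ENNReal.ofReal ε < metricSlope I u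
  set A : ℝ := cb - ρ with hA
  set B : ℝ := cb + 2*ρ with hB
  have hAB : A ≤ B := by rw [hA, hB]; linarith
  set J : X → ℝ := clampI I A B with hJ
  have hJlsc : LowerSemicontinuous J := clampI_lsc hlsc A B hAB
  have hJge : ∀ w, A ≤ J w := fun w => clampI_ge w A B hAB
  -- The node replacement claim
  have claim : ∀ x : X, I x < ((cb + ρ/2 : ℝ) : EReal) →
      ∃ y, dist x y ≤ 4*ρ/ε + ρ ∧ I y < ((cb - ρ/2 : ℝ) : EReal) := by
    intro x hx
    obtain ⟨y, hy1, hy2, hy3⟩ := my_ekeland J hJlsc A hJge (ε/2) (by positivity) x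
    have hJx : J x ≤ cb + ρ/2 :=
      clampI_le_of_le hx.le (by rw [hA]; linarith) (by rw [hB]; linarith)
    have hJyA : A ≤ J y := hJge y
    have hdxy : dist x y ≤ 4*ρ/ε := by
      have h1 : (ε/2) * dist x y ≤ 3*ρ/2 := by
        have h2 : A = cb - ρ := hA
        linarith
      rw [le_div_iff₀ hε]
      nlinarith
    by_cases hy : I y < ((cb - ρ/2 : ℝ) : EReal)
    · exact ⟨y, by linarith, hy⟩
    push_neg at hy
    have hyB : I y < ((B : ℝ) : EReal) := by
      by_contra hyB
      push_neg at hyB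
      have := clampI_eq_B hyB hAB
      rw [← hJ] at this
      rw [this, hB] at hy1
      linarith
    obtain ⟨vy, hvy⟩ : ∃ vy : ℝ, I y = (vy : EReal) :=
      ⟨(I y).toReal, (EReal.coe_toReal (ne_top_of_le_coe hyB.le) (hbot y)).symm⟩
    have hvy_ge : cb - ρ/2 ≤ vy := EReal.coe_le_coe_iff.mp (hvy ▸ hy)
    have hvy_ltB : vy < B := EReal.coe_lt_coe_iff.mp (hvy ▸ hyB)
    have hJy : J y = vy := clampI_eq hvy (by rw [hA]; linarith) hvy_ltB.le
    have hvy_le : vy ≤ cb + ρ/2 := by rw [← hJy]; linarith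
    have hslope : ENNReal.ofReal ε < metricSlope I y :=
      hcon y vy hvy (by linarith) (by linarith)
    obtain ⟨w, hw_ne, hw_dist, hw_desc⟩ :=
      exists_descent_of_slope_gt I (by rw [hvy]; exact EReal.coe_ne_top vy) hε hslope hρ
    have hdyw : 0 < dist y w := dist_pos.mpr (Ne.symm hw_ne)
    obtain ⟨bw, hbw, hbw_lt⟩ := real_descent I hbot hvy hdyw hw_desc hε
    by_cases hw : I w < ((cb - ρ/2 : ℝ) : EReal)
    · refine ⟨w, ?_, hw⟩
      calc dist x w ≤ dist x y + dist y w := dist_triangle _ _ _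
        _ ≤ 4*ρ/ε + ρ := by linarith
    push_neg at hw
    have hbw_ge : cb - ρ/2 ≤ bw := EReal.coe_le_coe_iff.mp (hbw ▸ hw)
    have hbw_ltB : bw < B := by rw [hB]; nlinarith
    have hJw : J w = bw := clampI_eq hbw (by rw [hA]; linarith) hbw_ltB.le
    have hcontr : J w ≤ J y - (ε/2) * dist y w := by
      rw [hJw, hJy]
      nlinarith
    exact absurd (hy3 w hcontr) hw_ne
  -- take a path with supremum < cb + ρ/2
  have h1 : sInf {a : EReal | ∃ γ : ℝ → X, ContinuousOn γ (Icc 0 1) ∧ γ 0 = μ ∧ γ 1 = ν ∧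
      a = ⨆ t ∈ Icc (0:ℝ) 1, I (γ t)} < ((cb + ρ/2 : ℝ) : EReal) := by
    rw [hcinf]
    exact EReal.coe_lt_coe_iff.mpr (by linarith)
  obtain ⟨a0, ⟨γ₀, hγc, hγ0, hγ1, ha0⟩, ha0lt⟩ := sInf_lt_iff.mp h1
  have hsup : ∀ t ∈ Icc (0:ℝ) 1, I (γ₀ t) < ((cb + ρ/2 : ℝ) : EReal) := by
    intro t ht
    refine lt_of_le_of_lt ?_ ha0lt
    rw [ha0]
    exact le_iSup₂ (f := fun t _ => I (γ₀ t)) t ht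
  -- uniform continuity of γ₀
  have huc := isCompact_Icc.uniformContinuousOn_of_continuous hγc
  rw [uniformContinuousOn_iff] at huc
  obtain ⟨dδ, hdδ, hucd⟩ := huc ρ hρ
  obtain ⟨N, hNgt⟩ := exists_nat_gt (max 1 (1/dδ))
  have hN1 : (1:ℝ) ≤ N := le_trans (le_max_left _ _) hNgt.le
  have hN0 : (0:ℝ) < N := by linarith
  have hNd : 1/(N:ℝ) < dδ := by
    rw [div_lt_iff₀ hN0]
    have h2 : 1/dδ < N := lt_of_le_of_lt (le_max_right _ _) hNgt
    rw [div_lt_iff₀ hdδ] at h2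
    linarith [mul_comm dδ (N:ℝ)]
  set x : ℕ → X := fun i => γ₀ ((i:ℝ)/N) with hx
  have hmem : ∀ i : ℕ, i ≤ N → ((i:ℝ)/N) ∈ Icc (0:ℝ) 1 := by
    intro i hi
    constructor
    · positivity
    · rw [div_le_one hN0]; exact_mod_cast hi
  -- choice of replacement nodes
  have hchoice : ∀ w : X, ∃ y : X, (I w < ((cb + ρ/2 : ℝ) : EReal)) →
      (dist w y ≤ 4*ρ/ε + ρ ∧ I y < ((cb - ρ/2 : ℝ) : EReal)) := by
    intro w
    by_cases h : I w < ((cb + ρ/2 : ℝ) : EReal)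
    · obtain ⟨y, hy⟩ := claim w h
      exact ⟨y, fun _ => hy⟩
    · exact ⟨w, fun h' => absurd h' h⟩
  choose Y hY using hchoice
  set z : ℕ → X := fun i => if i = 0 then μ else if N ≤ i then ν else Y (x i) with hz
  have hz0 : z 0 = μ := by simp [hz]
  have hzN : z N = ν := by
    have hNne : N ≠ 0 := by rintro rfl; norm_num at hN1
    simp [hz, hNne]
  have hznode : ∀ i, i ≤ N → I (z i) ≤ ((cb - ρ/2 : ℝ) : EReal) := by
    intro i hi
    rcases Nat.eq_zero_or_pos i with h0 | h0
    · subst h0; rw [hz0]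
      exact le_trans hμ (EReal.coe_le_coe_iff.mpr (by linarith))
    rcases Nat.lt_or_ge i N with hiN | hiN
    · have hne0 : i ≠ 0 := Nat.pos_iff_ne_zero.mp h0
      have hnotN : ¬ (N ≤ i) := Nat.not_le.mpr hiN
      have : z i = Y (x i) := by simp [hz, hne0, hnotN]
      rw [this]
      exact (hY (x i) (hsup _ (hmem i hi))).2.le
    · have : i = N := le_antisymm hi hiN
      subst this
      rw [hzN]
      exact le_trans hν (EReal.coe_le_coe_iff.mpr (by linarith))
  have hzx : ∀ i, i ≤ N → dist (z i) (x i) ≤ 4*ρ/ε + ρ := by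
    intro i hi
    rcases Nat.eq_zero_or_pos i with h0 | h0
    · subst h0
      have : x 0 = μ := by rw [hx]; simp [hγ0]
      rw [hz0, this, dist_self]
      positivity
    rcases Nat.lt_or_ge i N with hiN | hiN
    · have hne0 : i ≠ 0 := Nat.pos_iff_ne_zero.mp h0
      have hnotN : ¬ (N ≤ i) := Nat.not_le.mpr hiN
      have : z i = Y (x i) := by simp [hz, hne0, hnotN]
      rw [this, dist_comm]
      exact (hY (x i) (hsup _ (hmem i hi))).1
    · have hiN' : i = N := le_antisymm hi hiN
      subst hiN'
      have : x i = ν := by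
        rw [hx]
        simp only
        rw [div_self hN0.ne', hγ1]
      rw [hzN, this, dist_self]
      positivity
  have hxx : ∀ i, i < N → dist (x i) (x (i+1)) ≤ ρ := by
    intro i hi
    have h1 := hucd _ (hmem i hi.le) _ (hmem (i+1) hi)
    refine le_of_lt (h1 ?_)
    rw [Real.dist_eq]
    have : (i:ℝ)/N - ((i:ℝ)+1)/N = -(1/N) := by field_simp; ring
    push_cast
    rw [this, abs_neg, abs_of_pos (by positivity)]
    exact hNd
  have hzdist : ∀ i, i < N → dist (z i) (z (i+1)) ≤ 8*ρ/ε + 3*ρ := by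
    intro i hi
    have h1 := hzx i hi.le
    have h2 := hzx (i+1) hi
    have h3 := hxx i hi
    calc dist (z i) (z (i+1)) ≤ dist (z i) (x i) + dist (x i) (z (i+1)) := dist_triangle _ _ _
      _ ≤ dist (z i) (x i) + (dist (x i) (x (i+1)) + dist (x (i+1)) (z (i+1))) := by
          linarith [dist_triangle (x i) (x (i+1)) (z (i+1))]
      _ ≤ (4*ρ/ε + ρ) + (ρ + (4*ρ/ε + ρ)) := by
          rw [dist_comm (x (i+1)) (z (i+1))]
          linarith
      _ = 8*ρ/ε + 3*ρ := by ring
  obtain ⟨γ, hγcont, hγa, hγb, hγbound⟩ := chain_path hgeo hconv hbot z (cb - ρ/2) (cb - ρ/4)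
    (by linarith) N (fun i hi => hznode i hi)
    (fun i hi => by
      have h1 := hzdist i hi
      have h2 : (0:ℝ) ≤ dist (z i) (z (i+1)) := dist_nonneg
      have h3 : (0:ℝ) ≤ |lam| := abs_nonneg lam
      have h4 : dist (z i) (z (i+1))^2 ≤ (8*ρ/ε + 3*ρ)^2 := by nlinarith
      have : |lam|/8 * dist (z i) (z (i+1))^2 ≤ |lam|/8 * (8*ρ/ε + 3*ρ)^2 := by nlinarith
      linarith)
  have hmemS : (⨆ t ∈ Icc (0:ℝ) 1, I (γ t)) ∈ {a : EReal | ∃ γ : ℝ → X,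
      ContinuousOn γ (Icc 0 1) ∧ γ 0 = μ ∧ γ 1 = ν ∧
      a = ⨆ t ∈ Icc (0:ℝ) 1, I (γ t)} :=
    ⟨γ, hγcont.continuousOn, by rw [hγa, hz0], by rw [hγb, hzN], rfl⟩
  have hle := sInf_le hmemS
  rw [hcinf] at hle
  have hub : (⨆ t ∈ Icc (0:ℝ) 1, I (γ t)) ≤ ((cb - ρ/4 : ℝ) : EReal) := iSup₂_le hγbound
  have := EReal.coe_le_coe_iff.mp (le_trans hle hub)
  linarith
end MPAux
end Aux5
set_option maxHeartbeats 2000000 in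
/-- **Mountain pass theorem for l.s.c. λ-geodesically convex functionals** (Theorem 1.1), stated
on a complete geodesic metric space (in particular on the Wasserstein space `P₂(M)` over a
complete connected smooth Riemannian manifold): if `μ, ν ∈ D(I)`, the mountain pass level `c`
between `μ` and `ν` exceeds `c₁ = max {I μ, I ν}` and `I` satisfies the weak metric Palais–Smale
condition, then there is `η` with `I η = c` and `|∂I|(η) = |dI|(η) = 0`. -/
theorem mountain_pass_lsc {X : Type*} [MetricSpace X] [CompleteSpace X]
    (hgeo : IsGeodesicSpace X)
    (I : X → EReal) (hproper : ∃ x, I x ≠ ⊤) (hbot : ∀ x, I x ≠ ⊥)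
    (hlsc : LowerSemicontinuous I)
    (lam : ℝ) (hconv : GeodesicallyConvex I lam)
    (hPS : WeakPalaisSmaleLSC I)
    (μ ν : X) (hμ : I μ ≠ ⊤) (hν : I ν ≠ ⊤)
    (c c₁ : EReal)
    (hc : c = sInf {a : EReal | ∃ γ : ℝ → X, ContinuousOn γ (Icc 0 1) ∧ γ 0 = μ ∧ γ 1 = ν ∧
        a = ⨆ t ∈ Icc (0:ℝ) 1, I (γ t)})
    (hc₁ : c₁ = max (I μ) (I ν))
    (hgt : c₁ < c) :
    ∃ η : X, I η = c ∧ metricSlope I η = 0 ∧ lscWeakSlope I η = 0 := by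
  classical
  obtain ⟨mu1, hmμ⟩ : ∃ m : ℝ, I μ = (m : EReal) :=
    ⟨(I μ).toReal, MPAux.eq_coe_toReal hμ (hbot μ)⟩
  obtain ⟨mu2, hmν⟩ : ∃ m : ℝ, I ν = (m : EReal) :=
    ⟨(I ν).toReal, MPAux.eq_coe_toReal hν (hbot ν)⟩
  set cb1 : ℝ := max mu1 mu2 with hcb1
  have hc₁r : c₁ = ((cb1 : ℝ) : EReal) := by
    rw [hc₁, hmμ, hmν, hcb1]; norm_cast
  have hμ' : I μ ≤ ((cb1 : ℝ) : EReal) := by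
    rw [hmμ]; exact EReal.coe_le_coe_iff.mpr (le_max_left _ _)
  have hν' : I ν ≤ ((cb1 : ℝ) : EReal) := by
    rw [hmν]; exact EReal.coe_le_coe_iff.mpr (le_max_right _ _)
  have hub : c ≤ ((cb1 + |lam|/8 * (dist μ ν)^2 : ℝ) : EReal) := by
    obtain ⟨γ, hcont, h0, h1, hbd⟩ := MPAux.geodesic_piece hgeo hconv
      (M := cb1) (M' := cb1 + |lam|/8 * (dist μ ν)^2) hmμ hmν
      (le_max_left _ _) (le_max_right _ _) le_rfl
    rw [hc]
    exact le_trans (sInf_le ⟨γ, hcont.continuousOn, h0, h1, rfl⟩) (iSup₂_le hbd)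
  have hc_ne_top : c ≠ ⊤ := MPAux.ne_top_of_le_coe hub
  have hc_ne_bot : c ≠ ⊥ := by
    intro h
    rw [h] at hgt
    exact not_lt_bot hgt
  set cb : ℝ := c.toReal with hcbdef
  have hcb : c = ((cb : ℝ) : EReal) := MPAux.eq_coe_toReal hc_ne_top hc_ne_bot
  have hgt' : cb1 < cb := by
    rw [hc₁r, hcb] at hgt
    exact EReal.coe_lt_coe_iff.mp hgt
  have hcinf : sInf {a : EReal | ∃ γ : ℝ → X, ContinuousOn γ (Icc 0 1) ∧ γ 0 = μ ∧ γ 1 = ν ∧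
      a = ⨆ t ∈ Icc (0:ℝ) 1, I (γ t)} = ((cb : ℝ) : EReal) := hc.symm.trans hcb
  -- construct the Palais-Smale sequence
  have hseq : ∀ n : ℕ, ∃ (u : X) (a : ℝ), I u = (a : EReal) ∧ |a - cb| ≤ 1/((n:ℝ)+1) ∧
      metricSlope I u ≤ ENNReal.ofReal (min (1/((n:ℝ)+1)) (1/2)) := by
    intro n
    set ε : ℝ := min (1/((n:ℝ)+1)) (1/2) with hεdef
    have hε0 : 0 < ε := lt_min (by positivity) (by norm_num)
    set K : ℝ := 8/ε + 3 with hK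
    have hK0 : 0 < K := by rw [hK]; positivity
    set L : ℝ := |lam| with hL
    have hL0 : 0 ≤ L := abs_nonneg lam
    set ρ : ℝ := min (min (1/((n:ℝ)+1)) (cb - cb1)) (2/(L*K^2+1)) with hρdef
    have hρ0 : 0 < ρ :=
      lt_min (lt_min (by positivity) (by linarith)) (by positivity)
    have hρa : ρ ≤ 1/((n:ℝ)+1) := le_trans (min_le_left _ _) (min_le_left _ _)
    have hρb : ρ ≤ cb - cb1 := le_trans (min_le_left _ _) (min_le_right _ _)
    have hρc : ρ ≤ 2/(L*K^2+1) := min_le_right _ _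
    have hρ1 : cb1 < cb - ρ/2 := by linarith
    have hρ2 : |lam|/8 * (8*ρ/ε + 3*ρ)^2 ≤ ρ/4 := by
      have h1 : ρ * (L*K^2+1) ≤ 2 := by
        rw [← le_div_iff₀ (by positivity)]
        exact hρc
      have h2 : 8*ρ/ε + 3*ρ = ρ * K := by rw [hK]; field_simp
      rw [h2, ← hL]
      nlinarith [mul_le_mul_of_nonneg_left h1 (by positivity : (0:ℝ) ≤ ρ/8), sq_nonneg (ρ*K)]
    obtain ⟨u, a, hu, h1, h2, h3⟩ := MPAux.exists_band_point hgeo hbot hlsc hconv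
      hμ' hν' hcinf hε0 hρ0 hρ1 hρ2
    exact ⟨u, a, hu, abs_le.mpr ⟨by linarith, by linarith⟩, h3⟩
  choose u av hu hua hus using hseq
  have hatend : Tendsto av atTop (𝓝 cb) := by
    rw [tendsto_iff_dist_tendsto_zero]
    refine squeeze_zero (fun n => dist_nonneg) (fun n => ?_)
      tendsto_one_div_add_atTop_nhds_zero_nat
    rw [Real.dist_eq]
    exact hua n
  have hItend : Tendsto (fun n => I (u n)) atTop (𝓝 (((cb:ℝ):EReal))) :=
    (EReal.tendsto_coe.mpr hatend).congr (fun n => (hu n).symm)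
  have hwtend : Tendsto (fun n => lscWeakSlope I (u n)) atTop (𝓝 0) := by
    have hbnd : ∀ n : ℕ, lscWeakSlope I (u n) ≤
        ENNReal.ofReal (2 * min (1/((n:ℝ)+1)) (1/2)) := by
      intro n
      set ε : ℝ := min (1/((n:ℝ)+1)) (1/2) with hεdef
      have hε0 : 0 < ε := lt_min (by positivity) (by norm_num)
      have hεh : ε ≤ 1/2 := min_le_right _ _
      have hε1 : ε < 1 := by linarith
      have hb := MPAux.lscWeakSlope_le_bound hbot
        (x := u n) (by rw [hu n]; exact EReal.coe_ne_top _) hε0 hε1 (hus n)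
      refine le_trans hb (ENNReal.ofReal_le_ofReal ?_)
      have h2 : (1:ℝ)/2 ≤ Real.sqrt (1 - ε^2) := by
        rw [show (1:ℝ)/2 = Real.sqrt ((1/2)^2) by rw [Real.sqrt_sq (by norm_num)]]
        exact Real.sqrt_le_sqrt (by nlinarith)
      have hden : (0:ℝ) < Real.sqrt (1 - ε^2) := by linarith
      rw [div_le_iff₀ hden]
      nlinarith
    have hg : Tendsto (fun n : ℕ => ENNReal.ofReal (2 * min (1/((n:ℝ)+1)) (1/2))) atTop
        (𝓝 0) := by
      have h2 : Tendsto (fun n : ℕ => min (1/((n:ℝ)+1)) (1/2)) atTop (𝓝 0) :=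
        squeeze_zero (fun n => le_min (by positivity) (by norm_num))
          (fun n => min_le_left _ _) tendsto_one_div_add_atTop_nhds_zero_nat
      have h3 : Tendsto (fun n : ℕ => 2 * min (1/((n:ℝ)+1)) (1/2)) atTop (𝓝 0) := by
        have := h2.const_mul (2:ℝ)
        simpa using this
      have := ENNReal.tendsto_ofReal h3
      simpa using this
    exact tendsto_of_tendsto_of_tendsto_of_le_of_le tendsto_const_nhds hg
      (fun n => zero_le) hbnd
  obtain ⟨η, φ, hφ, hconvseq⟩ := hPS u cb hItend hwtend
  have haφ : Tendsto (fun n => av (φ n)) atTop (𝓝 cb) := hatend.comp hφ.tendsto_atTop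
  -- I η ≤ cb by lower semicontinuity
  have hIη_le : I η ≤ ((cb : ℝ) : EReal) := by
    by_contra h
    push_neg at h
    obtain ⟨b', hb'1, hb'2⟩ := exists_between h
    have hb'_top : b' ≠ ⊤ := ne_top_of_lt hb'2
    have hb'_bot : b' ≠ ⊥ := by
      intro hb
      rw [hb] at hb'1
      exact not_lt_bot hb'1
    obtain ⟨b, hb⟩ : ∃ b : ℝ, b' = (b : EReal) :=
      ⟨b'.toReal, MPAux.eq_coe_toReal hb'_top hb'_bot⟩
    have hev1 : ∀ᶠ n in atTop, b' < I ((u ∘ φ) n) := hconvseq.eventually (hlsc η b' hb'2)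
    have hcblt : cb < b := by
      rw [hb] at hb'1
      exact EReal.coe_lt_coe_iff.mp hb'1
    have hev2 : ∀ᶠ n in atTop, av (φ n) < b := haφ.eventually_lt_const hcblt
    obtain ⟨n, h1, h2⟩ := (hev1.and hev2).exists
    rw [hb, Function.comp_apply, hu (φ n)] at h1
    have := EReal.coe_lt_coe_iff.mp h1
    linarith
  have hIη_top : I η ≠ ⊤ := MPAux.ne_top_of_le_coe hIη_le
  obtain ⟨e, hIη⟩ : ∃ e : ℝ, I η = (e : EReal) :=
    ⟨(I η).toReal, MPAux.eq_coe_toReal hIη_top (hbot η)⟩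
  have he_le : e ≤ cb := EReal.coe_le_coe_iff.mp (hIη ▸ hIη_le)
  -- I η ≥ cb
  have he_ge : cb ≤ e := by
    by_contra h
    push_neg at h
    by_cases hfr : ∀ᶠ n in atTop, u (φ n) ≠ η
    · set g : ℝ := (cb - e)/2 with hg
      have hg0 : 0 < g := by rw [hg]; linarith
      have hdist : Tendsto (fun n => dist (u (φ n)) η) atTop (𝓝 0) :=
        tendsto_iff_dist_tendsto_zero.mp hconvseq
      have hev1 : ∀ᶠ n in atTop, cb - g < av (φ n) :=
        haφ.eventually (eventually_gt_nhds (by linarith))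
      set d0 : ℝ := min 1 (g/(1+|lam|)) with hd0
      have hd00 : 0 < d0 := lt_min one_pos (by positivity)
      have hev2 : ∀ᶠ n in atTop, dist (u (φ n)) η < d0 := hdist.eventually_lt_const hd00
      obtain ⟨n, hne, h1, h2⟩ := (hfr.and (hev1.and hev2)).exists
      have hd : 0 < dist (u (φ n)) η := dist_pos.mpr hne
      have hT : (1:ℝ) ≤ (av (φ n) - e)/(dist (u (φ n)) η)
          + lam/2 * dist (u (φ n)) η := by
        set d : ℝ := dist (u (φ n)) η with hdd
        have hd1 : d ≤ 1 := le_of_lt (lt_of_lt_of_le h2 (min_le_left _ _))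
        have hd2 : d ≤ g/(1+|lam|) := le_of_lt (lt_of_lt_of_le h2 (min_le_right _ _))
        have h3 : g ≤ av (φ n) - e := by linarith
        have h4 : (1+|lam|) ≤ g/d := by
          rw [le_div_iff₀ hd]
          rw [le_div_iff₀ (by positivity : (0:ℝ) < 1+|lam|)] at hd2
          linarith
        have h5 : g/d ≤ (av (φ n) - e)/d := by gcongr
        have h8 : -(|lam|/2) ≤ lam/2*d := by
          nlinarith [neg_abs_le lam, hd.le, abs_nonneg lam]
        linarith [abs_nonneg lam]
      have hslope := MPAux.slope_ge_conv hgeo hconv hbot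
        (Ne.symm hne) (hu (φ n)) hIη
      have hchain := le_trans hslope (hus (φ n))
      have hmin0 : (0:ℝ) ≤ min (1/((φ n:ℝ)+1)) (1/2) := le_min (by positivity) (by norm_num)
      have hle2 := (ENNReal.ofReal_le_ofReal_iff hmin0).mp hchain
      have hminhalf : min (1/((φ n:ℝ)+1)) (1/2) ≤ 1/2 := min_le_right _ _
      linarith
    · rw [not_eventually] at hfr
      have hfr2 : ∃ᶠ n in atTop, av (φ n) = e := by
        refine hfr.mono (fun n hn => ?_)
        have heq : u (φ n) = η := not_not.mp hn
        have h2 := hu (φ n)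
        rw [heq, hIη] at h2
        exact EReal.coe_eq_coe_iff.mp h2.symm
      have hev : ∀ᶠ n in atTop, cb - (cb - e)/2 < av (φ n) :=
        haφ.eventually (eventually_gt_nhds (by linarith))
      obtain ⟨n, h1, h2⟩ := (hfr2.and_eventually hev).exists
      rw [h1] at h2
      linarith
  have hIηc : I η = ((cb : ℝ) : EReal) := by rw [hIη, le_antisymm he_le he_ge]
  -- the key global inequality at η
  have Hstar : ∀ y : X, ((cb + lam/2 * (dist η y)^2 : ℝ) : EReal) ≤ I y := by
    intro y
    by_contra hcon2
    push_neg at hcon2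
    have hyη : y ≠ η := by
      intro hyeq
      rw [hyeq, dist_self, hIηc] at hcon2
      have := EReal.coe_lt_coe_iff.mp hcon2
      nlinarith
    have hIy_top : I y ≠ ⊤ := ne_top_of_lt hcon2
    obtain ⟨by0, hby⟩ : ∃ b : ℝ, I y = (b : EReal) :=
      ⟨(I y).toReal, MPAux.eq_coe_toReal hIy_top (hbot y)⟩
    set D : ℝ := dist η y with hD
    have hD0 : 0 < D := dist_pos.mpr (Ne.symm hyη)
    have hby_lt : by0 < cb + lam/2 * D^2 := EReal.coe_lt_coe_iff.mp (hby ▸ hcon2)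
    set g0 : ℝ := cb + lam/2*D^2 - by0 with hg0
    have hg00 : 0 < g0 := by rw [hg0]; linarith
    have hdtend : Tendsto (fun n => dist (u (φ n)) y) atTop (𝓝 D) :=
      hconvseq.dist tendsto_const_nhds
    have hTlim : Tendsto (fun n => (av (φ n) - by0)/(dist (u (φ n)) y)
        + lam/2 * dist (u (φ n)) y) atTop (𝓝 ((cb - by0)/D + lam/2 * D)) :=
      ((haφ.sub tendsto_const_nhds).div hdtend hD0.ne').add
        (tendsto_const_nhds.mul hdtend)
    have hval : (cb - by0)/D + lam/2*D = g0/D := by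
      rw [hg0]; field_simp; ring
    set τ : ℝ := (g0/D)/2 with hτ
    have hτ0 : 0 < τ := by rw [hτ]; positivity
    have hev1 : ∀ᶠ n in atTop, τ < (av (φ n) - by0)/(dist (u (φ n)) y)
        + lam/2 * dist (u (φ n)) y := by
      refine hTlim.eventually (eventually_gt_nhds ?_)
      rw [hval, hτ]
      have : 0 < g0/D := by positivity
      linarith
    have hev2 : ∀ᶠ n in atTop, u (φ n) ≠ y := by
      have h1 := hdtend.eventually (eventually_gt_nhds (show D/2 < D by linarith))
      refine h1.mono (fun n hn => ?_)
      intro heq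
      rw [heq, dist_self] at hn
      linarith
    have hev3 : ∀ᶠ n in atTop, min (1/((φ n:ℝ)+1)) (1/2) < τ := by
      have h1 : Tendsto (fun n : ℕ => 1/((φ n:ℝ)+1)) atTop (𝓝 0) :=
        tendsto_one_div_add_atTop_nhds_zero_nat.comp hφ.tendsto_atTop
      exact (h1.eventually_lt_const hτ0).mono
        (fun n hn => lt_of_le_of_lt (min_le_left _ _) hn)
    obtain ⟨n, h1, h2, h3⟩ := (hev1.and (hev2.and hev3)).exists
    have hslope := MPAux.slope_ge_conv hgeo hconv hbot (Ne.symm h2) (hu (φ n)) hby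
    have hchain := le_trans hslope (hus (φ n))
    have hmin0 : (0:ℝ) ≤ min (1/((φ n:ℝ)+1)) (1/2) := le_min (by positivity) (by norm_num)
    have hle2 := (ENNReal.ofReal_le_ofReal_iff hmin0).mp hchain
    linarith
  -- the metric slope at η vanishes
  have hslope0 : metricSlope I η = 0 := by
    refine le_antisymm ?_ (zero_le)
    have hbound : ∀ θ : ℝ, 0 < θ → metricSlope I η ≤ ENNReal.ofReal θ := by
      intro θ hθ
      refine MPAux.metricSlope_le I (by rw [hIηc]; exact EReal.coe_ne_top cb) ?_
      set r : ℝ := 2*θ/(1+|lam|) with hr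
      have hr0 : 0 < r := by rw [hr]; positivity
      filter_upwards [MPAux.punctured_ball_mem hr0] with w hw
      obtain ⟨hw1, hw2⟩ := hw
      have hwη : w ≠ η := hw2
      set d : ℝ := dist η w with hd
      have hd0 : 0 < d := dist_pos.mpr (Ne.symm hwη)
      have hdr : d < r := by rw [hd, dist_comm]; exact mem_ball.mp hw1
      have hst := Hstar w
      have hsub : I η - I w ≤ ((-(lam/2) * d^2 : ℝ) : EReal) := by
        have h1 := EReal.sub_le_sub (le_of_eq hIηc) hst
        rw [← EReal.coe_sub] at h1
        have h2 : cb - (cb + lam/2 * (dist η w)^2) = -(lam/2) * d^2 := by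
          rw [hd]; ring
        rwa [h2] at h1
      have hmax : max (I η - I w) 0 ≤ ((max (-(lam/2)*d^2) 0 : ℝ) : EReal) := by
        rw [show ((max (-(lam/2)*d^2) 0 : ℝ) : EReal)
            = max ((-(lam/2)*d^2 : ℝ) : EReal) 0 by norm_cast]
        exact max_le_max hsub le_rfl
      have hmaxR : (max (I η - I w) 0).toReal ≤ max (-(lam/2)*d^2) 0 := by
        have hne_bot : max (I η - I w) 0 ≠ ⊥ := by
          intro hb
          have h0 : (0:EReal) ≤ max (I η - I w) 0 := le_max_right _ _
          rw [hb] at h0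
          simp at h0
        have := EReal.toReal_le_toReal hmax hne_bot (EReal.coe_ne_top _)
        simpa using this
      refine ENNReal.ofReal_le_ofReal ?_
      rw [div_le_iff₀ hd0]
      have h1 : max (-(lam/2)*d^2) 0 ≤ |lam|/2 * d^2 := by
        refine max_le ?_ (by positivity)
        nlinarith [neg_abs_le lam, sq_nonneg d]
      have h3 : d * (1+|lam|) < 2*θ := by
        rw [hr, lt_div_iff₀ (by positivity : (0:ℝ) < 1+|lam|)] at hdr
        linarith
      have h2 : |lam|/2*d^2 ≤ θ * d := by
        nlinarith [abs_nonneg lam, hd0.le]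
      linarith [hmaxR]
    have hlim0 : Tendsto (fun n : ℕ => ENNReal.ofReal (1/((n:ℝ)+1))) atTop (𝓝 0) := by
      have := ENNReal.tendsto_ofReal tendsto_one_div_add_atTop_nhds_zero_nat
      simpa using this
    exact ge_of_tendsto' hlim0 (fun n => hbound _ (by positivity))
  exact ⟨η, by rw [hIηc, hcb], hslope0,
    MPAux.lscWeakSlope_eq_zero hbot (by rw [hIηc]; exact EReal.coe_ne_top cb) hslope0⟩
end

section
/- Let (X,d) be a geodesic metric space and I : X → ℝ ∪ {+∞} a proper, lower semicontinuous, λ-geodesically convex functional, and let μ, ν ∈ D(I). Let Γ be the set of continuous curves γ : [0,1] → X with γ(0) = μ, γ(1) = ν, and let Γ_epi be the set of continuous curves γ_epi : [0,1] → (epi(I), d_epi) with γ_epi(0) = (μ, I(μ)) and γ_epi(1) = (ν, I(ν)). Then the two barrier values coincide: inf_{γ_epi ∈ Γ_epi} max_{t∈[0,1]} G_I(γ_epi(t)) = inf_{γ ∈ Γ} sup_{t∈[0,1]} I(γ(t)). -/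
open Set Metric Filter
open scoped ENNReal Topology

/-- The mountain pass barrier value computed over curves in the epigraph (with endpoints
`(μ, I μ)` and `(ν, I ν)`, and the epigraph extension `G_I` as energy) coincides with the
barrier value computed over curves in `X` with the energy `I` itself. -/
theorem epi_barrier_eq_barrier {X : Type*} [MetricSpace X]
    (hgeo : IsGeodesicSpace X)
    (I : X → EReal) (hproper : ∃ x, I x ≠ ⊤) (hbot : ∀ x, I x ≠ ⊥)
    (hlsc : LowerSemicontinuous I)
    (lam : ℝ) (hconv : GeodesicallyConvex I lam)
    (μ ν : X) (hμ : I μ ≠ ⊤) (hν : I ν ≠ ⊤) :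
    sInf {a : EReal | ∃ γepi : ℝ → Epi I, ContinuousOn γepi (Icc 0 1) ∧
        γepi 0 = Epi.mk' I μ (I μ).toReal (EReal.coe_toReal hμ (hbot μ)).ge ∧
        γepi 1 = Epi.mk' I ν (I ν).toReal (EReal.coe_toReal hν (hbot ν)).ge ∧
        a = ⨆ t ∈ Icc (0:ℝ) 1, ((epiExt I (γepi t) : ℝ) : EReal)}
      = sInf {a : EReal | ∃ γ : ℝ → X, ContinuousOn γ (Icc 0 1) ∧ γ 0 = μ ∧ γ 1 = ν ∧
        a = ⨆ t ∈ Icc (0:ℝ) 1, I (γ t)} := by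
  apply le_antisymm
  · -- lift curves from X into the epigraph
    apply le_sInf
    rintro A ⟨γ, hγc, hγ0, hγ1, rfl⟩
    by_cases htop : (⨆ t ∈ Icc (0:ℝ) 1, I (γ t)) = ⊤
    · rw [htop]; exact le_top
    set A : EReal := ⨆ t ∈ Icc (0:ℝ) 1, I (γ t) with hAdef
    have hle : ∀ t ∈ Icc (0:ℝ) 1, I (γ t) ≤ A := fun t ht =>
      le_iSup₂ (f := fun t (_ : t ∈ Icc (0:ℝ) 1) => I (γ t)) t ht
    have hμA : I μ ≤ A := by rw [← hγ0]; exact hle 0 ⟨le_refl 0, zero_le_one⟩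
    have hνA : I ν ≤ A := by rw [← hγ1]; exact hle 1 ⟨zero_le_one, le_refl 1⟩
    have hAbot : A ≠ ⊥ := fun h => hbot μ (le_bot_iff.1 (h ▸ hμA))
    set a' : ℝ := A.toReal with ha'
    have hA : (a' : EReal) = A := EReal.coe_toReal htop hAbot
    set Iμ' : ℝ := (I μ).toReal with hIμ'
    set Iν' : ℝ := (I ν).toReal with hIν'
    have hIμ : (Iμ' : EReal) = I μ := EReal.coe_toReal hμ (hbot μ)
    have hIν : (Iν' : EReal) = I ν := EReal.coe_toReal hν (hbot ν)
    have hμa : Iμ' ≤ a' := EReal.toReal_le_toReal hμA (hbot μ) htop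
    have hνa : Iν' ≤ a' := EReal.toReal_le_toReal hνA (hbot ν) htop
    set s : ℝ → ℝ := fun t => min 1 (max 0 t) with hs
    have hs0 : ∀ t, 0 ≤ s t := fun t => le_min zero_le_one (le_max_left 0 t)
    have hs1 : ∀ t, s t ≤ 1 := fun t => min_le_left _ _
    have hsc : Continuous s := continuous_const.min (continuous_const.max continuous_id)
    set u : ℝ → ℝ := fun t => min 1 (max 0 (3 * s t - 1)) with hu
    have hu0 : ∀ t, 0 ≤ u t := fun t => le_min zero_le_one (le_max_left 0 _)
    have hu1 : ∀ t, u t ≤ 1 := fun t => min_le_left _ _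
    have huc : Continuous u :=
      continuous_const.min (continuous_const.max (by fun_prop))
    set x : ℝ → X := fun t => γ (u t) with hx
    have hxc : ContinuousOn x (Icc 0 1) :=
      hγc.comp huc.continuousOn (fun t _ => ⟨hu0 t, hu1 t⟩)
    set ξ : ℝ → ℝ := fun t =>
      a' + max 0 (1 - 3 * s t) * (Iμ' - a') + max 0 (3 * s t - 2) * (Iν' - a') with hξ
    have hξc : Continuous ξ := by fun_prop
    have hξa : ∀ t, ξ t ≤ a' := by
      intro t
      have h1 : max 0 (1 - 3 * s t) * (Iμ' - a') ≤ 0 :=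
        mul_nonpos_of_nonneg_of_nonpos (le_max_left 0 _) (by linarith)
      have h2 : max 0 (3 * s t - 2) * (Iν' - a') ≤ 0 :=
        mul_nonpos_of_nonneg_of_nonpos (le_max_left 0 _) (by linarith)
      simp only [hξ]; linarith
    have hmem : ∀ t, I (x t) ≤ ((ξ t : ℝ) : EReal) := by
      intro t
      have h0 := hs0 t
      have h1 := hs1 t
      rcases le_or_gt (3 * s t) 1 with hc1 | hc1
      · have hu' : u t = 0 := by
          simp only [hu]
          rw [max_eq_left (by linarith), min_eq_right zero_le_one]
        have hx' : x t = μ := by show γ (u t) = μ; rw [hu', hγ0]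
        have hξ' : ξ t = a' + (1 - 3 * s t) * (Iμ' - a') := by
          simp only [hξ]
          rw [max_eq_right (by linarith), max_eq_left (by linarith)]
          ring
        rw [hx', ← hIμ, EReal.coe_le_coe_iff, hξ']
        nlinarith
      rcases le_or_gt 2 (3 * s t) with hc2 | hc2
      · have hu' : u t = 1 := by
          simp only [hu]
          rw [min_eq_left (le_max_of_le_right (by linarith))]
        have hx' : x t = ν := by show γ (u t) = ν; rw [hu', hγ1]
        have hξ' : ξ t = a' + (3 * s t - 2) * (Iν' - a') := by
          simp only [hξ]
          rw [max_eq_left (by linarith), max_eq_right (by linarith)]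
          ring
        rw [hx', ← hIν, EReal.coe_le_coe_iff, hξ']
        nlinarith
      · have hu' : u t = 3 * s t - 1 := by
          simp only [hu]
          rw [max_eq_right (by linarith), min_eq_right (by linarith)]
        have hξ' : ξ t = a' := by
          simp only [hξ]
          rw [max_eq_left (by linarith), max_eq_left (by linarith)]
          ring
        rw [hξ', hA]
        show I (γ (u t)) ≤ A
        rw [hu']
        exact hle _ ⟨by linarith, by linarith⟩
    set γepi : ℝ → Epi I := fun t => Epi.mk' I (x t) (ξ t) (hmem t) with hγepi
    have hγepic : ContinuousOn γepi (Icc 0 1) := by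
      rw [hγepi]
      simp only [Epi.mk']
      rw [Topology.IsEmbedding.subtypeVal.isInducing.continuousOn_iff]
      exact (WithLp.prod_continuous_toLp 2 X ℝ).comp_continuousOn
        (hxc.prodMk hξc.continuousOn)
    have hext : ∀ t, epiExt I (γepi t) = ξ t := by
      intro t; simp [hγepi, Epi.mk', epiExt]
    refine sInf_le_of_le (b := ⨆ t ∈ Icc (0:ℝ) 1, ((epiExt I (γepi t) : ℝ) : EReal)) ?_ ?_
    · refine ⟨γepi, hγepic, ?_, ?_, rfl⟩
      · apply Subtype.ext
        simp only [hγepi, Epi.mk']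
        congr 1
        have e1 : x 0 = μ := by
          have hs00 : s 0 = 0 := by
            show min 1 (max 0 (0:ℝ)) = 0
            norm_num
          have h00 : u 0 = 0 := by
            show min 1 (max 0 (3 * s 0 - 1)) = 0
            rw [hs00]; norm_num
          show γ (u 0) = μ
          rw [h00, hγ0]
        have hs00 : s 0 = 0 := by
          show min 1 (max 0 (0:ℝ)) = 0
          norm_num
        have e2 : ξ 0 = Iμ' := by
          show a' + max 0 (1 - 3 * s 0) * (Iμ' - a') + max 0 (3 * s 0 - 2) * (Iν' - a') = Iμ'
          rw [hs00, max_eq_right (by norm_num : (1:ℝ) - 3 * 0 ≥ 0).le,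
            max_eq_left (by norm_num : (3:ℝ) * 0 - 2 ≤ 0)]
          ring
        rw [e1, e2]
      · apply Subtype.ext
        simp only [hγepi, Epi.mk']
        congr 1
        have e1 : x 1 = ν := by
          have hs11 : s 1 = 1 := by
            show min 1 (max 0 (1:ℝ)) = 1
            norm_num
          have h11 : u 1 = 1 := by
            show min 1 (max 0 (3 * s 1 - 1)) = 1
            rw [hs11]; norm_num
          show γ (u 1) = ν
          rw [h11, hγ1]
        have hs11 : s 1 = 1 := by
          show min 1 (max 0 (1:ℝ)) = 1
          norm_num
        have e2 : ξ 1 = Iν' := by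
          show a' + max 0 (1 - 3 * s 1) * (Iμ' - a') + max 0 (3 * s 1 - 2) * (Iν' - a') = Iν'
          rw [hs11, max_eq_left (by norm_num : (1:ℝ) - 3 * 1 ≤ 0),
            max_eq_right (by norm_num : ((3:ℝ) * 1 - 2) ≥ 0).le]
          ring
        rw [e1, e2]
    · refine iSup₂_le fun t ht => ?_
      rw [hext t, ← hA, EReal.coe_le_coe_iff]
      exact hξa t
  · -- project curves from the epigraph down to X
    apply le_sInf
    rintro A ⟨γepi, hc, h0, h1, rfl⟩
    refine sInf_le_of_le (b := ⨆ t ∈ Icc (0:ℝ) 1, I ((γepi t).pt)) ?_ ?_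
    · refine ⟨fun t => (γepi t).pt, ?_, ?_, ?_, rfl⟩
      · have hcont : Continuous (fun p : Epi I => p.pt) :=
          continuous_fst.comp ((WithLp.prod_continuous_ofLp 2 X ℝ).comp
            continuous_subtype_val)
        exact hcont.comp_continuousOn hc
      · show (γepi 0).pt = μ
        rw [h0]; rfl
      · show (γepi 1).pt = ν
        rw [h1]; rfl
    · exact iSup₂_mono fun t ht => (γepi t).2
end

section
/- Let (X,d) be a compact geodesic metric space and I : X → ℝ ∪ {+∞} a proper, lower semicontinuous, λ-geodesically convex functional. Suppose μ ∈ D(I) is a strict local minimum of I (i.e. there is R > 0 with I(η) > I(μ) for all η ≠ μ with d(η,μ) ≤ R), and ν ∈ D(I), ν ≠ μ, satisfies I(ν) ≤ I(μ). Then there exists μ* ∈ X, distinct from μ and ν, such that |∂I|(μ*) = |dI|(μ*) = 0 and I(μ*) = c, where c = inf_{γ∈Γ} sup_{t∈[0,1]} I(γ(t)) > I(μ) and Γ is the set of continuous curves γ : [0,1] → X with γ(0) = μ, γ(1) = ν. (This is the abstract form of the paper's Theorem 1.2, which applies in particular to the McKean–Vlasov free energy on the space of probability measures on the torus equipped with the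 2-Wasserstein metric.) -/
open Set Metric Filter
open scoped ENNReal Topology

set_option maxHeartbeats 1600000

section MPAux
variable {X : Type*} [MetricSpace X]

/-- A lower semicontinuous `EReal`-valued function attains its minimum on a nonempty
compact set. -/
lemma lsc_minOn (I : X → EReal) (hI : LowerSemicontinuous I) {s : Set X}
    (hs : IsCompact s) (hne : s.Nonempty) : ∃ z ∈ s, ∀ w ∈ s, I z ≤ I w := by
  haveI : Nonempty s := hne.to_subtype
  haveI : CompactSpace s := isCompact_iff_compactSpace.1 hs
  set F : s → EReal := fun w => I w with hF
  have hFl : LowerSemicontinuous F := hI.comp continuous_subtype_val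
  have key : (⋂ w : s, {x : s | F x ≤ F w}).Nonempty := by
    apply IsCompact.nonempty_iInter_of_directed_nonempty_isCompact_isClosed
    · intro a b
      rcases le_total (F a) (F b) with h | h
      · exact ⟨a, subset_refl _, fun x hx => le_trans hx h⟩
      · exact ⟨b, fun x hx => le_trans hx h, subset_refl _⟩
    · exact fun w => ⟨w, by simp only [mem_setOf_eq, le_refl]⟩
    · exact fun w => (hFl.isClosed_preimage (F w)).isCompact
    · exact fun w => hFl.isClosed_preimage (F w)
  obtain ⟨z, hz⟩ := key
  refine ⟨z, z.2, fun w hw => ?_⟩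
  simpa using mem_iInter.1 hz ⟨w, hw⟩

lemma ereal_add_lt_add_coe {a : EReal} {u v : ℝ} (h1 : (u : EReal) < a) {b : EReal}
    (h2 : (v : EReal) < b) : ((u + v : ℝ) : EReal) < a + b := by
  rw [EReal.coe_add]
  exact EReal.add_lt_add h1 h2

/-- Adding a continuous real function to a lower semicontinuous `EReal` function preserves
lower semicontinuity. -/
lemma lsc_add_cont (I : X → EReal) (hI : LowerSemicontinuous I) (f : X → ℝ)
    (hf : Continuous f) : LowerSemicontinuous fun x => I x + (f x : EReal) := by
  intro x b hb
  simp only at hb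
  rcases eq_bot_or_bot_lt (I x) with hx | hx
  · rw [hx] at hb; simp at hb
  rcases eq_top_or_lt_top (I x) with hx2 | hx2
  · -- I x = ⊤, sum is ⊤
    have hq : ∃ q : ℝ, b < (q : EReal) := by
      rcases eq_bot_or_bot_lt b with hb' | hb'
      · exact ⟨0, hb' ▸ bot_lt_iff_ne_bot.2 (EReal.coe_ne_bot 0)⟩
      · have hbt : b ≠ ⊤ := by
          intro h; rw [h, hx2] at hb; simp [EReal.top_add_coe] at hb
        lift b to ℝ using ⟨hbt, hb'.ne'⟩
        exact ⟨b + 1, by exact_mod_cast lt_add_one b⟩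
    obtain ⟨q, hq⟩ := hq
    have h1 : ∀ᶠ y in 𝓝 x, ((q - f x + 1 : ℝ) : EReal) < I y :=
      hI x _ (show ((q - f x + 1 : ℝ) : EReal) < I x from hx2 ▸ EReal.coe_lt_top _)
    have h2 : ∀ᶠ y in 𝓝 x, ((f x - 1 : ℝ) : EReal) < ((f y : ℝ) : EReal) := by
      filter_upwards [hf.continuousAt.eventually (eventually_gt_nhds
        (show f x - 1 < f x by linarith))] with y hy
      exact_mod_cast hy
    filter_upwards [h1, h2] with y hy1 hy2
    calc b < (q : EReal) := hq
    _ = (((q - f x + 1) + (f x - 1) : ℝ) : EReal) := by norm_num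
    _ < I y + (f y : EReal) := ereal_add_lt_add_coe hy1 hy2
  · -- I x finite
    have hxne : I x ≠ ⊥ := hx.ne'
    have hxnt : I x ≠ ⊤ := hx2.ne
    lift I x to ℝ using ⟨hxnt, hxne⟩ with v hv
    have hblt : b < ((v + f x : ℝ) : EReal) := by rw [EReal.coe_add]; exact hb
    obtain ⟨q, hq1, hq2⟩ := EReal.exists_between_coe_real hblt
    have hθ : (0:ℝ) < v + f x - q := by
      have := EReal.coe_lt_coe_iff.1 hq2; linarith
    set θ := (v + f x - q) / 2 with hθdef
    have hθpos : 0 < θ := by positivity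
    have h1 : ∀ᶠ y in 𝓝 x, ((v - θ : ℝ) : EReal) < I y := by
      apply hI x
      rw [← hv]; exact_mod_cast (by linarith : v - θ < v)
    have h2 : ∀ᶠ y in 𝓝 x, ((f x - θ : ℝ) : EReal) < ((f y : ℝ) : EReal) := by
      filter_upwards [hf.continuousAt.eventually (eventually_gt_nhds
        (show f x - θ < f x by linarith))] with y hy
      exact_mod_cast hy
    filter_upwards [h1, h2] with y hy1 hy2
    calc b < (q : EReal) := hq1
    _ ≤ (((v - θ) + (f x - θ) : ℝ) : EReal) := by
        apply EReal.coe_le_coe_iff.2; rw [hθdef]; linarith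
    _ < I y + (f y : EReal) := ereal_add_lt_add_coe (lt_of_le_of_lt (le_refl _) hy1) hy2

/-- Package a continuous curve on `[0,1]` as a `Path`. -/
noncomputable def toPath {a b : X} (γ : ℝ → X) (hc : ContinuousOn γ (Icc 0 1))
    (ha : γ 0 = a) (hb : γ 1 = b) : Path a b where
  toFun := fun t => γ t
  continuous_toFun := hc.restrict
  source' := by simpa using ha
  target' := by simpa using hb

lemma toPath_range {a b : X} (γ : ℝ → X) (hc : ContinuousOn γ (Icc 0 1))
    (ha : γ 0 = a) (hb : γ 1 = b) :
    range ⇑(toPath γ hc ha hb) ⊆ γ '' (Icc 0 1) := by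
  rintro x ⟨u, rfl⟩
  exact ⟨u, u.2, rfl⟩

lemma chain_path (I : X → EReal) (β B Hd : ℝ)
    (H : ∀ a b : X, I a ≤ (β : EReal) → I b ≤ (β : EReal) → dist a b ≤ Hd →
      ∃ γ : ℝ → X, ContinuousOn γ (Icc 0 1) ∧ γ 0 = a ∧ γ 1 = b ∧
        ∀ t ∈ Icc (0:ℝ) 1, I (γ t) ≤ ((β + B : ℝ) : EReal))
    (z : ℕ → X) (N : ℕ) (hN : 1 ≤ N)
    (hz : ∀ i ≤ N, I (z i) ≤ (β : EReal))
    (hd : ∀ i < N, dist (z i) (z (i+1)) ≤ Hd) :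
    ∃ γ : ℝ → X, ContinuousOn γ (Icc 0 1) ∧ γ 0 = z 0 ∧ γ 1 = z N ∧
      ∀ t ∈ Icc (0:ℝ) 1, I (γ t) ≤ ((β + B : ℝ) : EReal) := by
  have key : ∀ M, 1 ≤ M → M ≤ N → ∃ P : Path (z 0) (z M),
      ∀ x ∈ range ⇑P, I x ≤ ((β + B : ℝ) : EReal) := by
    intro M hM1 hMN
    induction M, hM1 using Nat.le_induction with
    | base =>
      obtain ⟨γ, hcont, h0, h1, hbd⟩ := H (z 0) (z 1) (hz 0 (by omega)) (hz 1 hMN)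
        (hd 0 (by omega))
      refine ⟨toPath γ hcont h0 h1, fun x hx => ?_⟩
      obtain ⟨u, hu, rfl⟩ := toPath_range γ hcont h0 h1 hx
      exact hbd u hu
    | succ M hM1 ih =>
      obtain ⟨P, hP⟩ := ih (by omega)
      obtain ⟨γ, hcont, h0, h1, hbd⟩ := H (z M) (z (M+1)) (hz M (by omega))
        (hz (M+1) hMN) (hd M (by omega))
      refine ⟨P.trans (toPath γ hcont h0 h1), fun x hx => ?_⟩
      rw [Path.trans_range] at hx
      rcases hx with hx | hx
      · exact hP x hx
      · obtain ⟨u, hu, rfl⟩ := toPath_range γ hcont h0 h1 hx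
        exact hbd u hu
  obtain ⟨P, hP⟩ := key N hN le_rfl
  refine ⟨P.extend, P.continuous_extend.continuousOn, P.extend_zero, P.extend_one,
    fun t ht => ?_⟩
  rw [P.extend_apply ht]
  exact hP _ (mem_range_self _)

lemma ereal_coe_lim_le {r : ℕ → ℝ} {b : EReal} (h : ∀ n, (r n : EReal) ≤ b) {L : ℝ}
    (hL : Filter.Tendsto r atTop (𝓝 L)) : (L : EReal) ≤ b := by
  induction b with
  | bot => exact absurd (h 0) (by simp)
  | coe q =>
    have : ∀ n, r n ≤ q := fun n => EReal.coe_le_coe_iff.1 (h n)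
    exact EReal.coe_le_coe_iff.2 (le_of_tendsto hL (Eventually.of_forall this))
  | top => exact le_top

lemma crit_metricSlope (I : X → EReal) (hbot : ∀ x, I x ≠ ⊥) (μs : X) (κ c_r : ℝ)
    (hκ0 : 0 ≤ κ) (hIμs : I μs = (c_r : EReal))
    (hcrit : ∀ y, ((c_r - κ/2 * dist μs y ^ 2 : ℝ):EReal) ≤ I y) :
    metricSlope I μs = 0 := by
  rw [metricSlope, if_neg (by rw [hIμs]; exact EReal.coe_ne_top _)]
  rcases eq_or_neBot (𝓝[≠] μs) with hb | hb
  · rw [hb, limsup_bot]; rfl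
  have hev : ∀ᶠ y in 𝓝[≠] μs,
      ENNReal.ofReal ((max (I μs - I y) 0).toReal / dist μs y)
        ≤ ENNReal.ofReal (κ/2 * dist μs y) := by
    filter_upwards [self_mem_nhdsWithin] with y hy
    have hyne : y ≠ μs := hy
    have hd : 0 < dist μs y := dist_pos.2 (Ne.symm hyne)
    apply ENNReal.ofReal_le_ofReal
    have hnum : (max (I μs - I y) 0).toReal ≤ κ/2 * dist μs y ^ 2 := by
      rcases eq_top_or_lt_top (I y) with hyt | hyt
      · rw [hIμs, hyt, EReal.sub_top]
        rw [max_eq_right (bot_le : (⊥:EReal) ≤ 0)]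
        simp
        positivity
      · have hyeq : I y = (((I y).toReal : ℝ) : EReal) := (EReal.coe_toReal hyt.ne (hbot y)).symm
        set yr : ℝ := (I y).toReal with hyr
        have hyrge : c_r - κ/2 * dist μs y ^ 2 ≤ yr := by
          have := hcrit y
          rw [hyeq] at this
          exact EReal.coe_le_coe_iff.1 this
        rw [hIμs, hyeq, ← EReal.coe_sub]
        rcases le_or_gt (c_r - yr) 0 with hle | hlt
        · rw [max_eq_right]
          · simp; positivity
          · exact_mod_cast EReal.coe_le_coe_iff.2 hle
        · rw [max_eq_left]
          · rw [EReal.toReal_coe]; linarith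
          · exact_mod_cast EReal.coe_le_coe_iff.2 hlt.le
    calc (max (I μs - I y) 0).toReal / dist μs y
        ≤ (κ/2 * dist μs y ^ 2) / dist μs y := by gcongr
    _ = κ/2 * dist μs y := by field_simp
  have htend : Tendsto (fun y => ENNReal.ofReal (κ/2 * dist μs y)) (𝓝[≠] μs) (𝓝 0) := by
    have h1 : Tendsto (fun y => κ/2 * dist μs y) (𝓝[≠] μs) (𝓝 0) := by
      have h2 : Tendsto (fun y => dist μs y) (𝓝 μs) (𝓝 0) := by
        have h2' : Continuous (fun y : X => dist μs y) :=
          Continuous.dist continuous_const continuous_id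
        have := h2'.tendsto μs
        simpa using this
      have h3 := h2.const_mul (κ/2)
      rw [mul_zero] at h3
      exact h3.mono_left nhdsWithin_le_nhds
    have h4 := (ENNReal.continuous_ofReal.tendsto 0).comp h1
    simpa [Function.comp_def] using h4
  refine le_antisymm ?_ zero_le
  calc limsup (fun y => ENNReal.ofReal ((max (I μs - I y) 0).toReal / dist μs y)) (𝓝[≠] μs)
      ≤ limsup (fun y => ENNReal.ofReal (κ/2 * dist μs y)) (𝓝[≠] μs) :=
        limsup_le_limsup hev
  _ = 0 := htend.limsup_eq

lemma crit_lscWeakSlope (I : X → EReal) (μs : X) (κ c_r : ℝ)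
    (hκ0 : 0 ≤ κ) (hIμs : I μs = (c_r : EReal))
    (hcrit : ∀ y, ((c_r - κ/2 * dist μs y ^ 2 : ℝ):EReal) ≤ I y) :
    lscWeakSlope I μs = 0 := by
  have hx : I μs ≤ (((I μs).toReal : ℝ) : EReal) := by rw [hIμs]; simp
  have hcr : (I μs).toReal = c_r := by rw [hIμs]; simp
  have hs0 : weakSlope (epiExt I) (Epi.mk' I μs (I μs).toReal hx) = 0 := by
    rw [weakSlope]
    refine le_antisymm (iSup₂_le ?_) zero_le
    rintro δ ⟨hδ, hreg⟩
    exfalso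
    obtain ⟨U, hU, α, hα, ψ, hψc, hψ⟩ := hreg
    set pm : Epi I := Epi.mk' I μs (I μs).toReal hx with hpm
    have hpmU : pm ∈ U := mem_of_mem_nhds hU
    set t : ℝ := min α (δ/(κ+1)) with htdef
    have ht0 : 0 < t := lt_min hα (div_pos hδ (by linarith))
    have htmem : t ∈ Icc (0:ℝ) α := ⟨ht0.le, min_le_left _ _⟩
    obtain ⟨hdist, hdrop⟩ := hψ pm hpmU t htmem
    set q : Epi I := ψ pm t with hq
    set yq : X := ((WithLp.equiv 2 (X × ℝ)) q.1).1 with hyq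
    set ξq : ℝ := ((WithLp.equiv 2 (X × ℝ)) q.1).2 with hξq
    have hqspec : I yq ≤ (ξq : EReal) := q.2
    have hpm1 : ((WithLp.equiv 2 (X × ℝ)) pm.1) = (μs, c_r) := by
      rw [hpm, ← hcr]
      simp [Epi.mk']
    have hptm : epiExt I pm = c_r := by rw [epiExt, hpm1]
    have hqext : epiExt I q = ξq := rfl
    -- component distance bounds
    have hcomp : dist ((WithLp.equiv 2 (X × ℝ)) q.1) ((WithLp.equiv 2 (X × ℝ)) pm.1)
        ≤ dist q.1 pm.1 := by
      have := (WithLp.prod_lipschitzWith_ofLp 2 X ℝ).dist_le_mul q.1 pm.1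
      simpa using this
    have hdq : dist q.1 pm.1 ≤ t := by
      rw [← Subtype.dist_eq]; exact hdist
    have hcomp2 : dist yq μs ≤ t ∧ dist ξq c_r ≤ t := by
      rw [hpm1] at hcomp
      rw [Prod.dist_eq] at hcomp
      constructor
      · exact le_trans (le_trans (le_max_left _ _) hcomp) hdq
      · exact le_trans (le_trans (le_max_right _ _) hcomp) hdq
    have hξ : ξq ≤ c_r - δ*t := by
      rw [hptm, hqext] at hdrop
      linarith
    have hr : c_r - κ/2 * dist μs yq ^ 2 ≤ ξq :=
      EReal.coe_le_coe_iff.1 (le_trans (hcrit yq) hqspec)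
    have hd2 : dist μs yq ^ 2 ≤ t ^ 2 := by
      have h1 : dist μs yq ≤ t := by rw [dist_comm]; exact hcomp2.1
      nlinarith [dist_nonneg (x := μs) (y := yq)]
    have hA : δ*t ≤ κ/2 * t^2 := by nlinarith [hκ0]
    have h5 : t*(κ+1) ≤ δ := by
      rw [← le_div_iff₀ (by linarith : (0:ℝ) < κ+1)]
      exact min_le_right _ _
    nlinarith [mul_le_mul_of_nonneg_right h5 ht0.le, mul_pos ht0 ht0]
  rw [lscWeakSlope, dif_pos hx]
  simp only [hs0]
  norm_num

end MPAux

/-- Abstract form of Theorem 1.2: for a proper, l.s.c., `λ`-geodesically convex functional `I`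
on a compact geodesic metric space (such as the McKean–Vlasov free energy on `P(T^d_L)` with the
`2`-Wasserstein metric), if `μ ∈ D(I)` is a strict local minimum of `I` and `ν ∈ D(I)`, `ν ≠ μ`,
satisfies `I ν ≤ I μ`, then the mountain pass level `c` between `μ` and `ν` satisfies
`c > I μ` and is attained at a critical point `μ*` distinct from `μ` and `ν`. -/
theorem mountain_pass_at_strict_local_min {X : Type*} [MetricSpace X] [CompactSpace X]
    (hgeo : IsGeodesicSpace X)
    (I : X → EReal) (hproper : ∃ x, I x ≠ ⊤) (hbot : ∀ x, I x ≠ ⊥)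
    (hlsc : LowerSemicontinuous I)
    (lam : ℝ) (hconv : GeodesicallyConvex I lam)
    (μ ν : X) (hμ : I μ ≠ ⊤) (hν : I ν ≠ ⊤) (hne : ν ≠ μ)
    (R : ℝ) (hR : 0 < R)
    (hstrict : ∀ η : X, η ≠ μ → dist η μ ≤ R → I μ < I η)
    (hIν : I ν ≤ I μ)
    (c : EReal)
    (hc : c = sInf {a : EReal | ∃ γ : ℝ → X, ContinuousOn γ (Icc 0 1) ∧ γ 0 = μ ∧ γ 1 = ν ∧
        a = ⨆ t ∈ Icc (0:ℝ) 1, I (γ t)}) :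
    I μ < c ∧
    ∃ μs : X, μs ≠ μ ∧ μs ≠ ν ∧ metricSlope I μs = 0 ∧ lscWeakSlope I μs = 0 ∧ I μs = c := by
  classical
  haveI : Nonempty X := ⟨μ⟩
  set κ : ℝ := max 0 (-lam) with hκdef
  have hκ0 : (0:ℝ) ≤ κ := le_max_left _ _
  have hlamκ : -lam ≤ κ := le_max_right _ _
  have fin : ∀ {x : X}, I x ≠ ⊤ → I x = ((I x).toReal : EReal) :=
    fun hx => (EReal.coe_toReal hx (hbot _)).symm
  have toReal_le : ∀ {x : X} {β : ℝ}, I x ≤ (β : EReal) → (I x).toReal ≤ β := by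
    intro x β h
    have := EReal.toReal_le_toReal h (hbot x) (EReal.coe_ne_top β)
    simpa using this
  have Cκ : ∀ (a b : X), I a ≠ ⊤ → I b ≠ ⊤ → ∀ γ : ℝ → X, IsUnitSpeedGeodesic γ a b →
      ∀ t ∈ Icc (0:ℝ) 1, I (γ t) ≤ (((1-t) * (I a).toReal + t * (I b).toReal
        + κ/2 * t * (1-t) * dist a b ^ 2 : ℝ) : EReal) := by
    intro a b ha hb γ hγ t ht
    have h := hconv a b ha hb γ hγ t ht
    rw [fin ha, fin hb] at h
    calc I (γ t) ≤ _ := h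
    _ = (((1-t) * (I a).toReal + t * (I b).toReal
          - lam/2 * t * (1-t) * dist a b ^ 2 : ℝ) : EReal) := by
        norm_cast
    _ ≤ _ := by
        apply EReal.coe_le_coe_iff.2
        nlinarith [mul_nonneg (mul_nonneg ht.1 (by linarith [ht.2] : (0:ℝ) ≤ 1 - t))
          (sq_nonneg (dist a b))]
  have SEG : ∀ (a b : X) (β Hd : ℝ), I a ≤ (β:EReal) → I b ≤ (β:EReal) → dist a b ≤ Hd →
      ∃ γ : ℝ → X, ContinuousOn γ (Icc 0 1) ∧ γ 0 = a ∧ γ 1 = b ∧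
        ∀ t ∈ Icc (0:ℝ) 1, I (γ t) ≤ ((β + κ/8 * Hd^2 : ℝ):EReal) := by
    intro a b β Hd ha hb hab
    have hanet : I a ≠ ⊤ := fun h => by simp [h] at ha
    have hbnet : I b ≠ ⊤ := fun h => by simp [h] at hb
    obtain ⟨γ, hγ⟩ := hgeo a b
    refine ⟨γ, hγ.1, hγ.2.1, hγ.2.2.1, fun t ht => ?_⟩
    calc I (γ t) ≤ _ := Cκ a b hanet hbnet γ hγ t ht
    _ ≤ _ := by
        apply EReal.coe_le_coe_iff.2
        have hA := toReal_le ha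
        have hB := toReal_le hb
        have hd0 : (0:ℝ) ≤ dist a b := dist_nonneg
        have hHd : (0:ℝ) ≤ Hd := le_trans hd0 hab
        have hsq : dist a b ^ 2 ≤ Hd ^ 2 := by nlinarith
        have h1 : (0:ℝ) ≤ (1-t)*(β - (I a).toReal) :=
          mul_nonneg (by linarith [ht.2]) (by linarith)
        have h2 : (0:ℝ) ≤ t*(β - (I b).toReal) := mul_nonneg ht.1 (by linarith)
        have h3 : (0:ℝ) ≤ κ*(1/4 - t*(1-t)) :=
          mul_nonneg hκ0 (by nlinarith [sq_nonneg (t - 1/2)])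
        have h5 : (0:ℝ) ≤ κ*(1/4 - t*(1-t)) * dist a b ^ 2 :=
          mul_nonneg h3 (sq_nonneg _)
        have h4 : (0:ℝ) ≤ κ*(Hd^2 - dist a b^2) := mul_nonneg hκ0 (by linarith)
        nlinarith [h1, h2, h5, h4]
  -- ============ lower bound: I μ < c ============
  have hdνμ : 0 < dist ν μ := dist_pos.2 hne
  set r : ℝ := min R (dist ν μ) / 2 with hrdef
  have hr0 : 0 < r := by rw [hrdef]; have := lt_min hR hdνμ; linarith
  have hrR : r ≤ R := by rw [hrdef]; have := min_le_left R (dist ν μ); linarith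
  have hrν : r ≤ dist ν μ := by
    rw [hrdef]; have := min_le_right R (dist ν μ); linarith
  have hitting : ∀ γ : ℝ → X, ContinuousOn γ (Icc 0 1) → γ 0 = μ → γ 1 = ν →
      ∃ t ∈ Icc (0:ℝ) 1, dist (γ t) μ = r := by
    intro γ hcont h0 h1
    have hf : ContinuousOn (fun t => dist (γ t) μ) (Icc 0 1) :=
      (continuous_id.dist continuous_const).comp_continuousOn hcont
    have hmem : r ∈ Icc (dist (γ 0) μ) (dist (γ 1) μ) := by
      rw [h0, h1]; exact ⟨by simpa [dist_self] using hr0.le, hrν⟩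
    obtain ⟨t, ht, hft⟩ := intermediate_value_Icc zero_le_one hf hmem
    exact ⟨t, ht, hft⟩
  have hsc : IsCompact {x : X | dist x μ = r} :=
    (isClosed_eq (continuous_id.dist continuous_const) continuous_const).isCompact
  have hsne : {x : X | dist x μ = r}.Nonempty := by
    obtain ⟨γ, hγ⟩ := hgeo μ ν
    have h1 : γ 1 = ν := hγ.2.2.1
    obtain ⟨t, ht, h⟩ := hitting γ hγ.1 hγ.2.1 h1
    exact ⟨γ t, h⟩
  obtain ⟨η₀, hη₀mem, hη₀min⟩ := lsc_minOn I hlsc hsc hsne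
  have hη₀dist : dist η₀ μ = r := hη₀mem
  have hημ : I μ < I η₀ := by
    apply hstrict η₀ _ (hη₀dist ▸ hrR)
    intro h
    rw [h, dist_self] at hη₀dist
    exact absurd hη₀dist.symm (ne_of_gt hr0)
  have hμc : I μ < c := by
    rw [hc]
    refine lt_of_lt_of_le hημ (le_sInf ?_)
    rintro a ⟨γ, hcont, h0, h1, rfl⟩
    obtain ⟨t, ht, hft⟩ := hitting γ hcont h0 h1
    calc I η₀ ≤ I (γ t) := hη₀min _ hft
    _ ≤ ⨆ t ∈ Icc (0:ℝ) 1, I (γ t) := le_biSup (fun t => I (γ t)) ht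
  -- ============ upper bound on c ============
  set Iμr : ℝ := (I μ).toReal with hIμrdef
  have hIμeq : I μ = (Iμr : EReal) := fin hμ
  have hcub : c ≤ ((Iμr + κ/8 * dist μ ν ^ 2 : ℝ) : EReal) := by
    obtain ⟨γg, hg1, hg2, hg3, hgbd⟩ := SEG μ ν Iμr (dist μ ν) hIμeq.le
      (le_trans hIν hIμeq.le) le_rfl
    have hmem : (⨆ t ∈ Icc (0:ℝ) 1, I (γg t)) ∈
        {a : EReal | ∃ γ : ℝ → X, ContinuousOn γ (Icc 0 1) ∧ γ 0 = μ ∧ γ 1 = ν ∧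
          a = ⨆ t ∈ Icc (0:ℝ) 1, I (γ t)} := ⟨γg, hg1, hg2, hg3, rfl⟩
    rw [hc]
    exact le_trans (sInf_le hmem) (iSup₂_le hgbd)
  have hctop : c ≠ ⊤ := fun h => by rw [h] at hcub; exact (EReal.coe_lt_top _).not_ge hcub
  have hcbot : c ≠ ⊥ := fun h => by rw [h] at hμc; exact absurd hμc (by simp)
  set c_r : ℝ := c.toReal with hcrdef
  have hceq : c = (c_r : EReal) := (EReal.coe_toReal hctop hcbot).symm
  have hIμrc : Iμr < c_r := by
    rw [hIμeq, hceq] at hμc; exact EReal.coe_lt_coe_iff.1 hμc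
  -- ============ existence of critical point at level c ============
  have Hcrit : ∃ μs : X, I μs = c ∧
      ∀ y : X, ((c_r - κ/2 * dist μs y ^ 2 : ℝ) : EReal) ≤ I y := by
    by_contra Hc
    push_neg at Hc
    have Dσ : ∃ σ : ℝ, 0 < σ ∧ ∀ x : X, ((c_r - σ : ℝ) : EReal) ≤ I x →
        I x ≤ ((c_r + σ : ℝ) : EReal) →
        ∃ y : X, I y < (((I x).toReal - κ/2 * dist x y ^ 2 - σ * dist x y : ℝ) : EReal) := by
      by_contra hD
      push_neg at hD
      have hDn : ∀ n : ℕ, ∃ x : X, ((c_r - 1/((n:ℝ)+1) : ℝ):EReal) ≤ I x ∧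
          I x ≤ ((c_r + 1/((n:ℝ)+1) : ℝ):EReal) ∧
          ∀ y, (((I x).toReal - κ/2 * dist x y ^ 2 - (1/((n:ℝ)+1)) * dist x y : ℝ):EReal) ≤ I y :=
        fun n => hD (1/((n:ℝ)+1)) (by positivity)
      set u : ℕ → X := fun n => (hDn n).choose with hu
      have huspec := fun n => (hDn n).choose_spec
      obtain ⟨a, φ, hφ, htend⟩ := CompactSpace.tendsto_subseq u
      have hσn : Tendsto (fun n => 1/((φ n : ℝ)+1)) atTop (𝓝 0) :=
        tendsto_one_div_add_atTop_nhds_zero_nat.comp hφ.tendsto_atTop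
      have hfin : ∀ n, I (u n) ≠ ⊤ := by
        intro n h
        have := (huspec n).2.1
        rw [h] at this
        exact (EReal.coe_lt_top _).not_ge this
      set A : ℕ → ℝ := fun n => (I (u n)).toReal with hA
      have hIAeq : ∀ n, I (u n) = ((A n : ℝ) : EReal) := fun n => fin (hfin n)
      have hA1 : ∀ n : ℕ, c_r - 1/((n:ℝ)+1) ≤ A n := by
        intro n
        have := (huspec n).1
        rw [hIAeq n] at this
        exact EReal.coe_le_coe_iff.1 this
      have hA2 : ∀ n : ℕ, A n ≤ c_r + 1/((n:ℝ)+1) := by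
        intro n
        have := (huspec n).2.1
        rw [hIAeq n] at this
        exact EReal.coe_le_coe_iff.1 this
      have hlow : Tendsto (fun n => c_r - 1/((φ n:ℝ)+1)) atTop (𝓝 c_r) := by
        simpa using tendsto_const_nhds.sub hσn
      have hhigh : Tendsto (fun n => c_r + 1/((φ n:ℝ)+1)) atTop (𝓝 c_r) := by
        simpa using tendsto_const_nhds.add hσn
      have hAtend : Tendsto (fun n => A (φ n)) atTop (𝓝 c_r) :=
        tendsto_of_tendsto_of_tendsto_of_le_of_le hlow hhigh
          (fun n => hA1 (φ n)) (fun n => hA2 (φ n))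
      have hdisttend : ∀ y : X, Tendsto (fun n => dist (u (φ n)) y) atTop (𝓝 (dist a y)) :=
        fun y => htend.dist tendsto_const_nhds
      have hcrit : ∀ y : X, ((c_r - κ/2 * dist a y ^ 2 : ℝ):EReal) ≤ I y := by
        intro y
        have hr : Tendsto (fun n => A (φ n) - κ/2 * dist (u (φ n)) y ^ 2
            - (1/((φ n:ℝ)+1)) * dist (u (φ n)) y) atTop
            (𝓝 (c_r - κ/2 * dist a y ^ 2 - 0 * dist a y)) :=
          (hAtend.sub (((hdisttend y).pow 2).const_mul _)).sub (hσn.mul (hdisttend y))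
        rw [zero_mul, sub_zero] at hr
        exact ereal_coe_lim_le (fun n => (huspec (φ n)).2.2 y) hr
      have hIa_ge : (c_r : EReal) ≤ I a := by
        have := hcrit a
        simpa [dist_self] using this
      have hIa_le : I a ≤ (c_r : EReal) := by
        by_contra hgt
        push_neg at hgt
        obtain ⟨b, hb1, hb2⟩ := exists_between hgt
        have hbt : b ≠ ⊤ := fun h => absurd (h ▸ hb2) not_top_lt
        have hbb : b ≠ ⊥ := fun h => absurd (h ▸ hb1) (by simp)
        lift b to ℝ using ⟨hbt, hbb⟩ with br
        have hev : ∀ᶠ z in 𝓝 a, (br : EReal) < I z := hlsc a _ hb2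
        have hev2 : ∀ᶠ n in atTop, (br:EReal) < I (u (φ n)) := htend.eventually hev
        have hble : ∀ᶠ n in atTop, br ≤ c_r + 1/((φ n:ℝ)+1) := by
          filter_upwards [hev2] with n hn
          have h2 := lt_of_lt_of_le hn (huspec (φ n)).2.1
          exact (EReal.coe_lt_coe_iff.1 h2).le
        have hfinal : br ≤ c_r := ge_of_tendsto hhigh hble
        exact absurd hb1 (not_lt.2 (EReal.coe_le_coe_iff.2 hfinal))
      have hIac : I a = c := by
        rw [hceq]; exact le_antisymm hIa_le hIa_ge
      obtain ⟨y0, hy0⟩ := Hc a hIac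
      exact absurd hy0 (not_lt.2 (hcrit y0))
    obtain ⟨σ, hσ, hDσ⟩ := Dσ
    -- descent lemma
    have DL : ∀ ε : ℝ, 0 < ε → ε ≤ σ → ∀ x : X, I x ≤ ((c_r + ε : ℝ):EReal) →
        ∃ z : X, I z ≤ ((c_r - ε : ℝ):EReal) ∧ dist x z ≤ 2*ε/σ := by
      intro ε hε hεσ x hx
      by_cases hx0 : I x ≤ ((c_r - ε : ℝ):EReal)
      · exact ⟨x, hx0, by rw [dist_self]; positivity⟩
      push_neg at hx0
      have hxnet : I x ≠ ⊤ := fun h => by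
        rw [h] at hx; exact (EReal.coe_lt_top _).not_ge hx
      set Ib : X → EReal := fun w => max (I w) ((c_r - ε : ℝ):EReal) with hIbdef
      have hIbl : LowerSemicontinuous Ib := by
        intro w b hb
        rcases lt_or_ge b ((c_r - ε:ℝ):EReal) with hbC | hbC
        · exact Eventually.of_forall fun y => lt_of_lt_of_le hbC (le_max_right _ _)
        · have hbI : b < I w := by
            by_contra hno
            push_neg at hno
            exact absurd hb (not_lt.2 (max_le hno hbC))
          filter_upwards [hlsc w b hbI] with y hy
          exact lt_of_lt_of_le hy (le_max_left _ _)
      have hFl : LowerSemicontinuous (fun w => Ib w + ((σ * dist w x : ℝ) : EReal)) :=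
        lsc_add_cont _ hIbl _ (continuous_const.mul (continuous_id.dist continuous_const))
      obtain ⟨z, -, hzmin'⟩ := lsc_minOn _ hFl isCompact_univ ⟨x, mem_univ x⟩
      have hzmin : ∀ w : X, Ib z + ((σ * dist z x:ℝ):EReal) ≤ Ib w + ((σ * dist w x : ℝ):EReal) :=
        fun w => hzmin' w (mem_univ w)
      have hIbx : Ib x = I x := max_eq_left hx0.le
      have hFx : Ib z + ((σ * dist z x : ℝ):EReal) ≤ I x := by
        calc Ib z + ((σ * dist z x : ℝ):EReal) ≤ Ib x + ((σ * dist x x : ℝ):EReal) := hzmin x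
        _ = I x := by rw [hIbx, dist_self, mul_zero, EReal.coe_zero, add_zero]
      have hxle2 : I x ≤ ((c_r + ε:ℝ):EReal) := hx
      have hdzx : dist z x ≤ 2*ε/σ := by
        have h1 : ((c_r - ε:ℝ):EReal) + ((σ * dist z x:ℝ):EReal) ≤ ((c_r + ε:ℝ):EReal) :=
          le_trans (add_le_add_left (le_max_right _ _) _) (le_trans hFx hxle2)
        rw [← EReal.coe_add] at h1
        have h2 := EReal.coe_le_coe_iff.1 h1
        rw [le_div_iff₀ hσ]
        linarith
      refine ⟨z, ?_, by rw [dist_comm]; exact hdzx⟩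
      by_contra hzgt
      push_neg at hzgt
      have hIbzeq : Ib z = I z := max_eq_left hzgt.le
      have hzle : I z ≤ ((c_r + ε:ℝ):EReal) := by
        calc I z = Ib z := hIbzeq.symm
        _ ≤ Ib z + ((σ * dist z x:ℝ):EReal) := by
            refine le_add_of_nonneg_right ?_
            exact_mod_cast EReal.coe_nonneg.2 (by positivity)
        _ ≤ I x := hFx
        _ ≤ _ := hxle2
      have hznet : I z ≠ ⊤ := fun h => by
        rw [h] at hzle; exact (EReal.coe_lt_top _).not_ge hzle
      set Z : ℝ := (I z).toReal with hZdef
      have hIzeq : I z = (Z : EReal) := fin hznet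
      have hZub : Z ≤ c_r + ε := by
        rw [hIzeq] at hzle; exact EReal.coe_le_coe_iff.1 hzle
      have hZlb : c_r - ε < Z := by
        rw [hIzeq] at hzgt; exact EReal.coe_lt_coe_iff.1 hzgt
      obtain ⟨y, hy⟩ := hDσ z
        (by rw [hIzeq]; exact EReal.coe_le_coe_iff.2 (by linarith))
        (by rw [hIzeq]; exact EReal.coe_le_coe_iff.2 (by linarith))
      rw [← hZdef] at hy
      obtain ⟨d, hddef⟩ : ∃ d : ℝ, dist z y = d := ⟨_, rfl⟩
      rw [hddef] at hy
      have hd0 : 0 < d := by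
        rcases lt_or_eq_of_le (hddef ▸ (dist_nonneg : (0:ℝ) ≤ dist z y)) with h | h
        · exact h
        · exfalso
          have hzy : z = y := dist_eq_zero.1 (hddef.trans h.symm)
          rw [← hzy, hIzeq, ← h] at hy
          rw [(by ring : Z - κ/2 * 0^2 - σ * 0 = Z)] at hy
          exact lt_irrefl _ hy
      have hynet : I y ≠ ⊤ := fun h => by
        rw [h] at hy; exact (EReal.coe_lt_top _).not_ge hy.le
      set Yr : ℝ := (I y).toReal with hYdef
      have hIyeq : I y = (Yr : EReal) := fin hynet
      have hYlt : Yr < Z - κ/2 * d^2 - σ * d := by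
        rw [hIyeq] at hy; exact EReal.coe_lt_coe_iff.1 hy
      obtain ⟨γ, hγ⟩ := hgeo z y
      have hgd : ∀ t ∈ Icc (0:ℝ) 1, dist (γ t) z = t * d := by
        intro t ht
        have h0mem : (0:ℝ) ∈ Icc (0:ℝ) 1 := ⟨le_refl 0, zero_le_one⟩
        have h := hγ.2.2.2 t ht 0 h0mem
        rw [hγ.2.1, hddef] at h
        simpa [abs_of_nonneg ht.1] using h
      have key2 : ∀ t ∈ Icc (0:ℝ) 1, (Z : EReal) ≤ Ib (γ t) + ((σ*(t*d) :ℝ):EReal) := by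
        intro t ht
        have h1 := hzmin (γ t)
        have htri : dist (γ t) x ≤ t*d + dist z x := by
          calc dist (γ t) x ≤ dist (γ t) z + dist z x := dist_triangle _ _ _
          _ = t*d + dist z x := by rw [hgd t ht]
        have h2 : Ib (γ t) + ((σ * dist (γ t) x:ℝ):EReal)
            ≤ Ib (γ t) + ((σ*(t*d) + σ*dist z x :ℝ):EReal) := by
          apply add_le_add_right
          apply EReal.coe_le_coe_iff.2
          have hσd := mul_le_mul_of_nonneg_left htri hσ.le
          linarith [hσd]
        have h3 : (Z:EReal) + ((σ*dist z x:ℝ):EReal)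
            ≤ (Ib (γ t) + ((σ*(t*d):ℝ):EReal)) + ((σ*dist z x:ℝ):EReal) := by
          calc (Z:EReal) + ((σ*dist z x:ℝ):EReal) = Ib z + ((σ*dist z x:ℝ):EReal) := by
                rw [hIbzeq, hIzeq]
          _ ≤ Ib (γ t) + ((σ * dist (γ t) x:ℝ):EReal) := h1
          _ ≤ Ib (γ t) + ((σ*(t*d) + σ*dist z x :ℝ):EReal) := h2
          _ = (Ib (γ t) + ((σ*(t*d):ℝ):EReal)) + ((σ*dist z x:ℝ):EReal) := by
                rw [EReal.coe_add, ← add_assoc]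
        exact (EReal.addLECancellable_coe _).add_le_add_iff_right.1 h3
      have key1 : ∀ t ∈ Ioc (0:ℝ) 1, I (γ t) < ((Z - σ*(t*d) : ℝ):EReal) := by
        intro t ht
        have ht' : t ∈ Icc (0:ℝ) 1 := ⟨ht.1.le, ht.2⟩
        have h := Cκ z y hznet hynet γ hγ t ht'
        rw [← hZdef, ← hYdef, hddef] at h
        refine lt_of_le_of_lt h ?_
        apply EReal.coe_lt_coe_iff.2
        nlinarith [mul_lt_mul_of_pos_left hYlt ht.1,
          mul_nonneg (mul_nonneg hκ0 (sq_nonneg t)) (sq_nonneg d)]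
      by_cases hcase : ∃ t ∈ Ioc (0:ℝ) 1, ((c_r - ε:ℝ):EReal) ≤ I (γ t)
      · obtain ⟨t, ht, hge⟩ := hcase
        have hIbγ : Ib (γ t) = I (γ t) := max_eq_left hge
        have h1 := key2 t ⟨ht.1.le, ht.2⟩
        rw [hIbγ] at h1
        have h2 : I (γ t) + ((σ*(t*d):ℝ):EReal)
            < ((Z - σ*(t*d):ℝ):EReal) + ((σ*(t*d):ℝ):EReal) :=
          EReal.add_lt_add_right_coe (key1 t ht) _
        rw [← EReal.coe_add] at h2
        rw [(by ring : Z - σ*(t*d) + σ*(t*d) = Z)] at h2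
        exact absurd h1 (not_le.2 h2)
      · push_neg at hcase
        set t0 : ℝ := min 1 ((Z - (c_r - ε))/(2*σ*d+1)) with ht0def
        have ht0mem : t0 ∈ Ioc (0:ℝ) 1 :=
          ⟨lt_min one_pos (div_pos (by linarith) (by positivity)), min_le_left _ _⟩
        have hIbγ : Ib (γ t0) = ((c_r - ε:ℝ):EReal) :=
          max_eq_right (hcase t0 ht0mem).le
        have h1 := key2 t0 ⟨ht0mem.1.le, ht0mem.2⟩
        rw [hIbγ, ← EReal.coe_add] at h1
        have h2 : Z ≤ (c_r - ε) + σ*(t0*d) := EReal.coe_le_coe_iff.1 h1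
        have h3 : t0 ≤ (Z - (c_r - ε))/(2*σ*d+1) := min_le_right _ _
        have h4 : t0 * (2*σ*d+1) ≤ Z - (c_r - ε) := by
          rw [← le_div_iff₀ (by positivity : (0:ℝ) < 2*σ*d+1)]
          exact h3
        have h5 : σ*d*(t0 * (2*σ*d+1)) ≤ σ*d*(Z - (c_r - ε)) :=
          mul_le_mul_of_nonneg_left h4 (mul_nonneg hσ.le hd0.le)
        have h6 : σ*d*(Z - (c_r - ε)) ≤ σ*d*(σ*(t0*d)) := by
          apply mul_le_mul_of_nonneg_left _ (mul_nonneg hσ.le hd0.le)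
          linarith
        have hwv : (0:ℝ) ≤ (σ*d)*(σ*(t0*d)) := mul_nonneg (mul_nonneg hσ.le hd0.le) (mul_nonneg hσ.le (mul_nonneg ht0mem.1.le hd0.le))
        have e1 : σ*d*(t0 * (2*σ*d+1)) = 2*((σ*d)*(σ*(t0*d))) + σ*(t0*d) := by ring
        rw [e1] at h5
        linarith [h5, h6, hwv, hZlb]
    -- ============ chain argument ============
    set ε : ℝ := min (min ((c_r - Iμr)/2) σ) (σ^2/(8*κ+8)) with hεdef
    have hε : 0 < ε := by
      refine lt_min (lt_min (by linarith) hσ) ?_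
      have : (0:ℝ) < 8*κ+8 := by linarith
      positivity
    have hεσ : ε ≤ σ := le_trans (min_le_left _ _) (min_le_right _ _)
    have hε1 : ε ≤ (c_r - Iμr)/2 := le_trans (min_le_left _ _) (min_le_left _ _)
    have hε2 : ε ≤ σ^2/(8*κ+8) := min_le_right _ _
    have hIμc : I μ ≤ ((c_r - ε : ℝ):EReal) := by
      rw [hIμeq]; exact EReal.coe_le_coe_iff.2 (by linarith)
    have hIνc : I ν ≤ ((c_r - ε : ℝ):EReal) := le_trans hIν hIμc
    have hBlt : κ/8 * (8*ε/σ)^2 < ε := by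
      have h8 : (0:ℝ) < 8*κ+8 := by linarith
      have hkey : ε * (8*κ+8) ≤ σ^2 := (le_div_iff₀ h8).1 hε2
      have hσ2 : (0:ℝ) < σ^2 := by positivity
      have heq : κ/8 * (8*ε/σ)^2 = 8*κ*ε^2/σ^2 := by
        field_simp
      rw [heq, div_lt_iff₀ hσ2]
      nlinarith [mul_le_mul_of_nonneg_left hkey hε.le, mul_pos hε hε]
    have hclt : c < ((c_r + ε : ℝ):EReal) := by
      rw [hceq]; exact EReal.coe_lt_coe_iff.2 (by linarith)
    rw [hc] at hclt
    obtain ⟨a0, ⟨γ0, hγ0c, hγ00, hγ01, ha0⟩, ha0lt⟩ := sInf_lt_iff.1 hclt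
    have hγ0bd : ∀ t ∈ Icc (0:ℝ) 1, I (γ0 t) < ((c_r + ε:ℝ):EReal) := by
      intro t ht
      calc I (γ0 t) ≤ ⨆ t ∈ Icc (0:ℝ) 1, I (γ0 t) := le_biSup (fun t => I (γ0 t)) ht
      _ = a0 := ha0.symm
      _ < _ := ha0lt
    have huc := (isCompact_Icc (a := (0:ℝ)) (b := 1)).uniformContinuousOn_of_continuous hγ0c
    rw [uniformContinuousOn_iff] at huc
    obtain ⟨δ, hδ, hucδ⟩ := huc (4*ε/σ) (by positivity)
    obtain ⟨n0, hn0⟩ := exists_nat_one_div_lt hδ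
    set N : ℕ := n0 + 1 with hNdef
    have hN1 : 1 ≤ N := Nat.le_add_left 1 n0
    have hNpos : (0:ℝ) < (N:ℝ) := by exact_mod_cast Nat.succ_pos n0
    have hstep : (1:ℝ)/(N:ℝ) < δ := by
      rw [hNdef]; push_cast; exact hn0
    set p : ℕ → X := fun i => γ0 ((i:ℝ)/(N:ℝ)) with hpdef
    have hpmem : ∀ i : ℕ, i ≤ N → ((i:ℝ)/(N:ℝ)) ∈ Icc (0:ℝ) 1 := by
      intro i hi
      constructor
      · positivity
      · rw [div_le_one hNpos]; exact_mod_cast hi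
    have hpbd : ∀ i : ℕ, i ≤ N → I (p i) ≤ ((c_r + ε:ℝ):EReal) :=
      fun i hi => (hγ0bd _ (hpmem i hi)).le
    have hpstep : ∀ i : ℕ, i < N → dist (p i) (p (i+1)) < 4*ε/σ := by
      intro i hi
      apply hucδ _ (hpmem i hi.le) _ (hpmem (i+1) hi)
      have hcast : (((i+1:ℕ)):ℝ) = (i:ℝ)+1 := by push_cast; ring
      rw [Real.dist_eq, hcast]
      have heq : (i:ℝ)/(N:ℝ) - ((i:ℝ)+1)/(N:ℝ) = -(1/(N:ℝ)) := by
        field_simp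
        ring
      rw [heq, abs_neg, abs_of_nonneg (by positivity)]
      exact hstep
    set w : ℕ → X := fun i => if i = 0 then μ else if h : i < N then
        (DL ε hε hεσ (p i) (hpbd i h.le)).choose else ν with hwdef
    have hw0 : w 0 = μ := by rw [hwdef]; simp
    have hwN : w N = ν := by
      rw [hwdef]; simp only
      rw [if_neg (by omega), dif_neg (by omega)]
    have hwbd : ∀ i ≤ N, I (w i) ≤ ((c_r - ε:ℝ):EReal) := by
      intro i hi
      rcases eq_or_ne i 0 with rfl | h0
      · rw [hw0]; exact hIμc
      rcases lt_or_ge i N with hiN | hiN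
      · have : w i = (DL ε hε hεσ (p i) (hpbd i hiN.le)).choose := by
          rw [hwdef]; simp only; rw [if_neg h0, dif_pos hiN]
        rw [this]
        exact (DL ε hε hεσ (p i) (hpbd i hiN.le)).choose_spec.1
      · have hieq : i = N := le_antisymm hi hiN
        rw [hieq, hwN]; exact hIνc
    have hp0 : p 0 = μ := by
      rw [hpdef]; simp only; rw [Nat.cast_zero, zero_div]; exact hγ00
    have hpN : p N = ν := by
      rw [hpdef]; simp only; rw [div_self (ne_of_gt hNpos)]; exact hγ01
    have hwdist : ∀ i ≤ N, dist (p i) (w i) ≤ 2*ε/σ := by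
      intro i hi
      rcases eq_or_ne i 0 with rfl | h0
      · rw [hw0, hp0, dist_self]; positivity
      rcases lt_or_ge i N with hiN | hiN
      · have : w i = (DL ε hε hεσ (p i) (hpbd i hiN.le)).choose := by
          rw [hwdef]; simp only; rw [if_neg h0, dif_pos hiN]
        rw [this]
        exact (DL ε hε hεσ (p i) (hpbd i hiN.le)).choose_spec.2
      · have hieq : i = N := le_antisymm hi hiN
        rw [hieq, hwN, hpN, dist_self]; positivity
    have hwstep : ∀ i, i < N → dist (w i) (w (i+1)) ≤ 8*ε/σ := by
      intro i hi
      calc dist (w i) (w (i+1))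
          ≤ dist (w i) (p i) + dist (p i) (p (i+1)) + dist (p (i+1)) (w (i+1)) :=
            dist_triangle4 _ _ _ _
      _ ≤ 2*ε/σ + 4*ε/σ + 2*ε/σ := by
          have h1 : dist (w i) (p i) ≤ 2*ε/σ := by
            rw [dist_comm]; exact hwdist i hi.le
          have h2 := (hpstep i hi).le
          have h3 := hwdist (i+1) hi
          have h3' : dist (p (i+1)) (w (i+1)) ≤ 2*ε/σ := h3
          linarith
      _ = 8*ε/σ := by ring
    obtain ⟨γf, hγfc, hγf0, hγf1, hγfbd⟩ := chain_path I (c_r - ε) (κ/8*(8*ε/σ)^2)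
      (8*ε/σ) (fun a b ha hb hd => SEG a b (c_r - ε) (8*ε/σ) ha hb hd) w N hN1 hwbd hwstep
    rw [hw0] at hγf0
    rw [hwN] at hγf1
    have hmem : (⨆ t ∈ Icc (0:ℝ) 1, I (γf t)) ∈
        {a : EReal | ∃ γ : ℝ → X, ContinuousOn γ (Icc 0 1) ∧ γ 0 = μ ∧ γ 1 = ν ∧
          a = ⨆ t ∈ Icc (0:ℝ) 1, I (γ t)} := ⟨γf, hγfc, hγf0, hγf1, rfl⟩
    have hle : c ≤ ⨆ t ∈ Icc (0:ℝ) 1, I (γf t) := by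
      rw [hc]; exact sInf_le hmem
    have hlt : (⨆ t ∈ Icc (0:ℝ) 1, I (γf t)) < c := by
      apply lt_of_le_of_lt (iSup₂_le hγfbd)
      rw [hceq]
      exact EReal.coe_lt_coe_iff.2 (by linarith [hBlt])
    exact absurd hle (not_le.2 hlt)
  obtain ⟨μs, hIμsc, hcritμs⟩ := Hcrit
  have hIμseq : I μs = (c_r : EReal) := by rw [hIμsc, hceq]
  refine ⟨hμc, μs, ?_, ?_, ?_, ?_, hIμsc⟩
  · intro h
    rw [h] at hIμsc
    rw [hIμsc] at hμc
    exact lt_irrefl _ hμc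
  · intro h
    rw [h] at hIμsc
    rw [hIμsc] at hIν
    exact absurd hμc (not_lt.2 hIν)
  · exact crit_metricSlope I hbot μs κ c_r hκ0 hIμseq hcritμs
  · exact crit_lscWeakSlope I μs κ c_r hκ0 hIμseq hcritμs
end
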